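/- arXiv:0905.3646 — 7 statements merged into one kernel-verified Lean document; each statement's English description precedes it below -/
import Mathlib

section
/- The product numerical range of any operator A on ℂ^K ⊗ ℂ^M contains the barycenter of its spectrum: (1/(KM))·Tr(A) ∈ Λ⊗(A). -/
open Matrix Kronecker
open scoped Pointwise ComplexOrder

noncomputable section

/-- A product (separable) vector `x ⊗ y` in `ℂ^K ⊗ ℂ^M`. -/
def prodVec {K M : ℕ} (x : Fin K → ℂ) (y : Fin M → ℂ) : Fin K × Fin M → ℂ :=
  fun p => x p.1 * y p.2

/-- Product numerical range of an operator on `ℂ^K ⊗ ℂ^M`. -/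
def pnr {K M : ℕ} (X : Matrix (Fin K × Fin M) (Fin K × Fin M) ℂ) : Set ℂ :=
  {z | ∃ x : Fin K → ℂ, ∃ y : Fin M → ℂ,
    star x ⬝ᵥ x = 1 ∧ star y ⬝ᵥ y = 1 ∧
    star (prodVec x y) ⬝ᵥ (X *ᵥ prodVec x y) = z}

/-- Product numerical range viewed as a set of real numbers (for Hermitian operators). -/
def pnrR {K M : ℕ} (X : Matrix (Fin K × Fin M) (Fin K × Fin M) ℂ) : Set ℝ :=
  {r | ∃ x : Fin K → ℂ, ∃ y : Fin M → ℂ,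
    star x ⬝ᵥ x = 1 ∧ star y ⬝ᵥ y = 1 ∧
    star (prodVec x y) ⬝ᵥ (X *ᵥ prodVec x y) = (r : ℂ)}

/-- Standard numerical range of an operator on `ℂ^K`. -/
def nr {K : ℕ} (A : Matrix (Fin K) (Fin K) ℂ) : Set ℂ :=
  {z | ∃ ψ : Fin K → ℂ, star ψ ⬝ᵥ ψ = 1 ∧ star ψ ⬝ᵥ (A *ᵥ ψ) = z}

namespace Bary
variable {n : ℕ}
variable {n : ℕ}

def qf (A : Matrix (Fin n) (Fin n) ℂ) (ψ : Fin n → ℂ) : ℂ := star ψ ⬝ᵥ (A *ᵥ ψ)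

def bf (A : Matrix (Fin n) (Fin n) ℂ) (φ ψ : Fin n → ℂ) : ℂ := star φ ⬝ᵥ (A *ᵥ ψ)

lemma qf_expand (A : Matrix (Fin n) (Fin n) ℂ) (a b : ℂ) (x y : Fin n → ℂ) :
    qf A (a • x + b • y) =
      (starRingEnd ℂ) a * a * qf A x + (starRingEnd ℂ) a * b * bf A x y
      + (starRingEnd ℂ) b * a * bf A y x + (starRingEnd ℂ) b * b * qf A y := by
  simp [qf, bf, mulVec_add, mulVec_smul, dotProduct_add, add_dotProduct,
    dotProduct_smul, smul_dotProduct, star_smul, smul_eq_mul, star_add]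
  ring

lemma qf_smul (A : Matrix (Fin n) (Fin n) ℂ) (a : ℂ) (x : Fin n → ℂ) :
    qf A (a • x) = (starRingEnd ℂ) a * a * qf A x := by
  simp [qf, mulVec_smul, dotProduct_smul, smul_dotProduct, star_smul, smul_eq_mul]
  ring

lemma qf_one (v : Fin n → ℂ) : qf (1 : Matrix (Fin n) (Fin n) ℂ) v = star v ⬝ᵥ v := by
  simp [qf, one_mulVec]

lemma sdp_eq (v : Fin n → ℂ) :
    star v ⬝ᵥ v = ((∑ i, Complex.normSq (v i) : ℝ) : ℂ) := by
  push_cast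
  simp [dotProduct, Complex.normSq_eq_conj_mul_self, Pi.star_apply]

lemma sdp_re_nonneg (v : Fin n → ℂ) : 0 ≤ (star v ⬝ᵥ v).re := by
  rw [sdp_eq, Complex.ofReal_re]
  exact Finset.sum_nonneg fun i _ => Complex.normSq_nonneg (v i)

lemma sdp_im (v : Fin n → ℂ) : (star v ⬝ᵥ v).im = 0 := by
  rw [sdp_eq]; simp

lemma sdp_eq_zero {v : Fin n → ℂ} (h : star v ⬝ᵥ v = 0) : v = 0 := by
  rw [sdp_eq] at h
  have h' : (∑ i, Complex.normSq (v i) : ℝ) = 0 := by exact_mod_cast h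
  have := (Finset.sum_eq_zero_iff_of_nonneg (fun i _ => Complex.normSq_nonneg (v i))).mp h'
  funext i
  exact Complex.normSq_eq_zero.mp (this i (Finset.mem_univ i))

lemma bf_conj (A : Matrix (Fin n) (Fin n) ℂ) (x y : Fin n → ℂ) :
    bf (1 : Matrix (Fin n) (Fin n) ℂ) y x
      = (starRingEnd ℂ) (bf (1 : Matrix (Fin n) (Fin n) ℂ) x y) := by
  simp only [bf, one_mulVec, dotProduct]
  rw [map_sum]
  congr 1; funext i
  simp [Pi.star_apply, mul_comm]

lemma segment_mem (A : Matrix (Fin n) (Fin n) ℂ) {x y : Fin n → ℂ}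
    (hx : star x ⬝ᵥ x = 1) (hy : star y ⬝ᵥ y = 1)
    (hqx : qf A x = 0) (hqy : qf A y = 1) {t : ℝ} (ht : t ∈ Set.Icc (0:ℝ) 1) :
    ∃ ψ : Fin n → ℂ, star ψ ⬝ᵥ ψ = 1 ∧ qf A ψ = (t : ℂ) := by
  classical
  set b1 := bf A x y with hb1
  set b2 := bf A y x with hb2
  set d := b1 - (starRingEnd ℂ) b2 with hd
  set u : ℂ := if d = 0 then 1 else d / ((‖d‖ : ℝ) : ℂ) with hu_def
  have hu : (starRingEnd ℂ) u * u = 1 := by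
    by_cases h : d = 0
    · simp [hu_def, h]
    · have habs : (‖d‖ : ℝ) ≠ 0 := norm_ne_zero_iff.mpr h
      simp only [hu_def, if_neg h, map_div₀, Complex.conj_ofReal]
      rw [div_mul_div_comm, ← Complex.normSq_eq_conj_mul_self]
      rw [Complex.normSq_eq_norm_sq]
      push_cast
      have habsC : ((‖d‖ : ℝ) : ℂ) ≠ 0 := by exact_mod_cast habs
      rw [sq, div_self (mul_ne_zero habsC habsC)]
  have him : ((starRingEnd ℂ) u * d).im = 0 := by
    by_cases h : d = 0
    · rw [h, mul_zero]; simp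
    · have habs : (‖d‖ : ℝ) ≠ 0 := norm_ne_zero_iff.mpr h
      simp only [hu_def, if_neg h, map_div₀, Complex.conj_ofReal]
      rw [div_mul_eq_mul_div, ← Complex.normSq_eq_conj_mul_self]
      rw [Complex.div_im]
      simp
  set x' := u • x with hx'def
  have hx' : star x' ⬝ᵥ x' = 1 := by
    rw [hx'def, ← qf_one, qf_smul, qf_one, hx, mul_one, hu]
  have hqx' : qf A x' = 0 := by rw [hx'def, qf_smul, hqx, mul_zero]
  have hbxy : bf A x' y = (starRingEnd ℂ) u * b1 := by
    simp [bf, hx'def, star_smul, smul_dotProduct, smul_eq_mul, hb1]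
  have hbyx : bf A y x' = u * b2 := by
    simp [bf, hx'def, mulVec_smul, dotProduct_smul, smul_eq_mul, hb2]
  set cross := (starRingEnd ℂ) u * b1 + u * b2 with hcross
  have hcrossim : cross.im = 0 := by
    have h1 : cross = (starRingEnd ℂ) u * d + ((starRingEnd ℂ) (u * b2) + u * b2) := by
      rw [hcross, hd, _root_.map_mul]; ring
    rw [h1]
    simp only [Complex.add_im, him, Complex.conj_im, zero_add]
    ring
  -- the path
  set ψp : ℝ → (Fin n → ℂ) := fun s => ((1 - s : ℝ) : ℂ) • x' + ((s : ℝ) : ℂ) • y with hψp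
  set c1 : ℝ := cross.re with hc1
  have hcross_eq : cross = (c1 : ℂ) := by
    apply Complex.ext <;> simp [hc1, hcrossim]
  set e := bf 1 x' y + bf 1 y x' with he
  have heim : e.im = 0 := by
    rw [he, bf_conj A x' y]
    simp [Complex.add_im]
  set c2 : ℝ := e.re with hc2
  have he_eq : e = (c2 : ℂ) := by apply Complex.ext <;> simp [hc2, heim]
  have hf : ∀ s : ℝ, qf A (ψp s) = (((1 - s) * s * c1 + s ^ 2 : ℝ) : ℂ) := by
    intro s
    rw [hψp]
    rw [qf_expand A _ _ x' y, hqx', hqy, hbxy, hbyx]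
    rw [Complex.conj_ofReal, Complex.conj_ofReal]
    have hr : ((((1 - s) * s * c1 + s ^ 2 : ℝ)) : ℂ)
        = ((1 - s : ℝ) : ℂ) * ((s : ℝ) : ℂ) * cross + ((s : ℝ) : ℂ) ^ 2 := by
      push_cast
      rw [hcross_eq]
    rw [hr, hcross]
    ring
  have hN : ∀ s : ℝ, star (ψp s) ⬝ᵥ (ψp s)
      = (((1 - s) ^ 2 + (1 - s) * s * c2 + s ^ 2 : ℝ) : ℂ) := by
    intro s
    rw [hψp, ← qf_one]
    rw [qf_expand (1 : Matrix (Fin n) (Fin n) ℂ) _ _ x' y, qf_one, qf_one, hx', hy]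
    rw [Complex.conj_ofReal, Complex.conj_ofReal]
    have hr : ((((1 - s) ^ 2 + (1 - s) * s * c2 + s ^ 2 : ℝ)) : ℂ)
        = ((1 - s : ℝ) : ℂ) ^ 2 + ((1 - s : ℝ) : ℂ) * ((s : ℝ) : ℂ) * e + ((s : ℝ) : ℂ) ^ 2 := by
      push_cast
      rw [he_eq]
    rw [hr, he]
    ring
  set Nr : ℝ → ℝ := fun s => (1 - s) ^ 2 + (1 - s) * s * c2 + s ^ 2 with hNr
  have hNpos : ∀ s ∈ Set.Icc (0:ℝ) 1, 0 < Nr s := by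
    intro s _
    have h1 : 0 ≤ Nr s := by
      have h2 := sdp_re_nonneg (ψp s)
      rw [hN s, Complex.ofReal_re] at h2
      exact h2
    rcases h1.lt_or_eq with h | h
    · exact h
    · exfalso
      have h0 : star (ψp s) ⬝ᵥ (ψp s) = 0 := by
        rw [hN s]
        show ((Nr s : ℝ) : ℂ) = 0
        exact_mod_cast h.symm
      have hz : ψp s = 0 := sdp_eq_zero h0
      have hax : ((1 - s : ℝ) : ℂ) • x' = (-(s : ℂ)) • y := by
        rw [neg_smul]
        exact eq_neg_of_add_eq_zero_left hz
      have hL : qf A (((1 - s : ℝ) : ℂ) • x') = 0 := by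
        rw [qf_smul, hqx', mul_zero]
      have hR : qf A ((-(s : ℂ)) • y) = ((s : ℂ)) ^ 2 := by
        rw [qf_smul, hqy, mul_one, map_neg, Complex.conj_ofReal]
        ring
      rw [hax, hR] at hL
      have hs0 : s = 0 := by
        have : (s : ℂ) = 0 := pow_eq_zero_iff (by norm_num) |>.mp hL
        exact_mod_cast this
      rw [hs0] at hz
      have : x' = 0 := by
        have := hz
        simp only [hψp] at this
        simpa using this
      rw [this] at hx'
      simp at hx'
  set g : ℝ → ℝ := fun s => ((1 - s) * s * c1 + s ^ 2) / Nr s with hg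
  have hg0 : g 0 = 0 := by simp [hg, hNr]
  have hg1 : g 1 = 1 := by norm_num [hg, hNr]
  have hcont : ContinuousOn g (Set.Icc (0:ℝ) 1) := by
    apply ContinuousOn.div
    · fun_prop
    · fun_prop
    · intro s hs; exact (hNpos s hs).ne'
  have hsub : Set.Icc (g 0) (g 1) ⊆ g '' Set.Icc 0 1 :=
    intermediate_value_Icc (by norm_num) hcont
  rw [hg0, hg1] at hsub
  obtain ⟨s, hs, hgs⟩ := hsub ht
  -- normalize
  set r : ℝ := Real.sqrt (Nr s) with hr_def
  have hNs : 0 < Nr s := hNpos s hs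
  have hr : 0 < r := Real.sqrt_pos.mpr hNs
  have hr2 : r ^ 2 = Nr s := Real.sq_sqrt hNs.le
  refine ⟨((r : ℂ))⁻¹ • ψp s, ?_, ?_⟩
  · rw [← qf_one, qf_smul, qf_one, hN s]
    rw [← Complex.ofReal_inv, Complex.conj_ofReal]
    rw [show ((1 - s) ^ 2 + (1 - s) * s * c2 + s ^ 2 : ℝ) = Nr s from rfl, ← hr2]
    have hrne : (r : ℂ) ≠ 0 := by exact_mod_cast hr.ne'
    push_cast
    field_simp
  · rw [qf_smul, hf s]
    rw [← Complex.ofReal_inv, Complex.conj_ofReal, ← hgs]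
    have hgs' : g s = ((1 - s) * s * c1 + s ^ 2) / r ^ 2 := by rw [hr2]
    rw [hgs']
    have hrne : (r : ℂ) ≠ 0 := by exact_mod_cast hr.ne'
    push_cast
    rw [div_eq_mul_inv, ← inv_pow, pow_two]
    ring

def NR (A : Matrix (Fin n) (Fin n) ℂ) : Set ℂ :=
  {z | ∃ ψ : Fin n → ℂ, star ψ ⬝ᵥ ψ = 1 ∧ qf A ψ = z}

lemma qf_affine (A : Matrix (Fin n) (Fin n) ℂ) (c z : ℂ) {ψ : Fin n → ℂ}
    (hψ : star ψ ⬝ᵥ ψ = 1) :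
    qf (c • (A - z • (1 : Matrix (Fin n) (Fin n) ℂ))) ψ = c * (qf A ψ - z) := by
  simp only [qf, smul_mulVec, sub_mulVec, one_mulVec, dotProduct_smul,
    dotProduct_sub, smul_eq_mul, hψ]
  ring

lemma convex_NR (A : Matrix (Fin n) (Fin n) ℂ) : Convex ℝ (NR A) := by
  intro z1 h1 z2 h2 p1 p2 hp1 hp2 hp
  obtain ⟨x, hx, hqx⟩ := h1
  obtain ⟨y, hy, hqy⟩ := h2
  by_cases hz : z1 = z2
  · subst hz
    refine ⟨x, hx, ?_⟩
    rw [hqx, ← add_smul, hp, one_smul]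
  · have hcne : z2 - z1 ≠ 0 := sub_ne_zero.mpr (Ne.symm hz)
    set A' := (z2 - z1)⁻¹ • (A - z1 • (1 : Matrix (Fin n) (Fin n) ℂ)) with hA'
    have key : ∀ ψ : Fin n → ℂ, star ψ ⬝ᵥ ψ = 1 →
        qf A' ψ = (z2 - z1)⁻¹ * (qf A ψ - z1) := fun ψ h => qf_affine A _ _ h
    have hqx' : qf A' x = 0 := by rw [key x hx, hqx]; simp
    have hqy' : qf A' y = 1 := by
      rw [key y hy, hqy]
      field_simp
    have ht : p2 ∈ Set.Icc (0:ℝ) 1 := ⟨hp2, by linarith⟩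
    obtain ⟨ψ, hψ1, hψ2⟩ := segment_mem A' hx hy hqx' hqy' ht
    refine ⟨ψ, hψ1, ?_⟩
    have h2 := key ψ hψ1
    rw [hψ2] at h2
    have h3 : qf A ψ = z1 + (z2 - z1) * (p2 : ℂ) := by
      field_simp at h2
      linear_combination -h2
    have hp1' : p1 = 1 - p2 := by linarith
    rw [h3, Complex.real_smul, Complex.real_smul, hp1']
    push_cast
    ring

lemma qf_entries (A : Matrix (Fin n) (Fin n) ℂ) (v : Fin n → ℂ) :
    qf A v = ∑ i, ∑ j, (starRingEnd ℂ) (v i) * A i j * v j := by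
  simp only [qf, dotProduct, mulVec, Pi.star_apply, Finset.mul_sum]
  refine Finset.sum_congr rfl fun i _ => Finset.sum_congr rfl fun j _ => ?_
  simp [mul_assoc, RCLike.star_def]

lemma basis_unit (i : Fin n) :
    star (Pi.single i (1:ℂ)) ⬝ᵥ Pi.single i (1:ℂ) = 1 := by
  simp [dotProduct, Pi.single_apply, Pi.star_apply, apply_ite]

lemma qf_single (A : Matrix (Fin n) (Fin n) ℂ) (i : Fin n) :
    qf A (Pi.single i (1:ℂ)) = A i i := by
  simp [qf, dotProduct, mulVec, Pi.single_apply, Pi.star_apply, apply_ite, mul_ite,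
    Finset.sum_ite_eq']

lemma mean_mem (hn : 0 < n) (A : Matrix (Fin n) (Fin n) ℂ) :
    ((n : ℂ))⁻¹ * A.trace ∈ NR A := by
  have hmem : ∀ i : Fin n, A i i ∈ NR A :=
    fun i => ⟨Pi.single i 1, basis_unit i, qf_single A i⟩
  have hw : ∀ i ∈ (Finset.univ : Finset (Fin n)), (0:ℝ) ≤ (n : ℝ)⁻¹ :=
    fun i _ => by positivity
  have hw1 : ∑ _i : Fin n, (n : ℝ)⁻¹ = 1 := by
    rw [Finset.sum_const, Finset.card_univ, Fintype.card_fin, nsmul_eq_mul]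
    field_simp
  have := (convex_NR A).sum_mem hw hw1 (fun i _ => hmem i)
  have heq : ∑ i : Fin n, (n : ℝ)⁻¹ • A i i = ((n : ℂ))⁻¹ * A.trace := by
    simp only [Complex.real_smul, Matrix.trace, Matrix.diag, Finset.mul_sum]
    push_cast
    rfl
  rwa [heq] at this

end Bary

open Bary

/-- The product numerical range contains the barycenter of the spectrum. -/
theorem pnr_mem_barycenter {K M : ℕ} (hK : 0 < K) (hM : 0 < M)
    (A : Matrix (Fin K × Fin M) (Fin K × Fin M) ℂ) :
    ((K * M : ℕ) : ℂ)⁻¹ * A.trace ∈ pnr A := by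
  classical
  set C : Matrix (Fin M) (Fin M) ℂ := fun j j' => ∑ i, A (i, j) (i, j') with hC
  have hCtr : C.trace = A.trace := by
    rw [Matrix.trace, Matrix.trace, Fintype.sum_prod_type]
    simp only [Matrix.diag, hC]
    exact Finset.sum_comm
  obtain ⟨y, hy, hqy⟩ := mean_mem hM C
  set B : Matrix (Fin K) (Fin K) ℂ :=
    fun i i' => ∑ j, ∑ j', (starRingEnd ℂ) (y j) * A (i, j) (i', j') * y j' with hB
  have hqCy : B.trace = qf C y := by
    calc B.trace = ∑ i, ∑ j, ∑ j', (starRingEnd ℂ) (y j) * A (i, j) (i, j') * y j' := by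
          simp only [Matrix.trace, Matrix.diag, hB]
      _ = ∑ j, ∑ i, ∑ j', (starRingEnd ℂ) (y j) * A (i, j) (i, j') * y j' :=
          Finset.sum_comm
      _ = ∑ j, ∑ j', ∑ i, (starRingEnd ℂ) (y j) * A (i, j) (i, j') * y j' :=
          Finset.sum_congr rfl fun j _ => Finset.sum_comm
      _ = ∑ j, ∑ j', (starRingEnd ℂ) (y j) * C j j' * y j' := by
          refine Finset.sum_congr rfl fun j _ => Finset.sum_congr rfl fun j' _ => ?_
          simp only [hC]
          rw [Finset.mul_sum, Finset.sum_mul]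
      _ = qf C y := (qf_entries C y).symm
  obtain ⟨x, hx, hqx⟩ := mean_mem hK B
  refine ⟨x, y, hx, hy, ?_⟩
  have hfin : star (prodVec x y) ⬝ᵥ (A *ᵥ prodVec x y) = qf B x := by
    have e1 : star (prodVec x y) ⬝ᵥ (A *ᵥ prodVec x y)
        = ∑ p : Fin K × Fin M, ∑ p' : Fin K × Fin M,
            (starRingEnd ℂ) (x p.1) * (starRingEnd ℂ) (y p.2)
              * A p p' * x p'.1 * y p'.2 := by
      simp only [dotProduct, mulVec, prodVec, Pi.star_apply, Finset.mul_sum]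
      refine Finset.sum_congr rfl fun p _ => Finset.sum_congr rfl fun p' _ => ?_
      simp [RCLike.star_def]
      ring
    have e2 : qf B x = ∑ i, ∑ i', ∑ j, ∑ j',
        (starRingEnd ℂ) (x i) * ((starRingEnd ℂ) (y j) * A (i, j) (i', j') * y j')
          * x i' := by
      rw [qf_entries B x]
      refine Finset.sum_congr rfl fun i _ => Finset.sum_congr rfl fun i' _ => ?_
      simp only [hB]
      rw [Finset.mul_sum, Finset.sum_mul]
      refine Finset.sum_congr rfl fun j _ => ?_
      rw [Finset.mul_sum, Finset.sum_mul]
    rw [e1, e2]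
    simp only [Fintype.sum_prod_type]
    refine Finset.sum_congr rfl fun i _ => ?_
    rw [Finset.sum_comm]
    refine Finset.sum_congr rfl fun i' _ => Finset.sum_congr rfl fun j _ =>
      Finset.sum_congr rfl fun j' _ => ?_
    ring
  rw [hfin, hqx, hqCy, hqy, hCtr]
  push_cast
  rw [mul_inv]
  ring
end
end

section
/- The product numerical range of a Hermitian operator X on ℂ^K ⊗ ℂ^M is a closed real interval [λ⊗_min, λ⊗_max], where λ⊗_min and λ⊗_max are the minimum and maximum of ⟨ψ_A ⊗ ψ_B, X(ψ_A ⊗ ψ_B)⟩ over normalized product vectors. -/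
open Matrix Kronecker
open scoped Pointwise ComplexOrder

noncomputable section

lemma quad_real {n : Type*} [Fintype n] (X : Matrix n n ℂ) (hX : X.IsHermitian)
    (v : n → ℂ) : (((star v ⬝ᵥ (X *ᵥ v)).re : ℂ)) = star v ⬝ᵥ (X *ᵥ v) := by
  rw [← Complex.conj_eq_iff_re]
  calc (starRingEnd ℂ) (star v ⬝ᵥ (X *ᵥ v)) = star (star v ⬝ᵥ (X *ᵥ v)) := rfl
    _ = star (X *ᵥ v) ⬝ᵥ star (star v) := by rw [← star_dotProduct_star]
    _ = (star v ᵥ* Xᴴ) ⬝ᵥ v := by rw [star_mulVec, star_star]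
    _ = star v ⬝ᵥ (Xᴴ *ᵥ v) := (dotProduct_mulVec _ _ _).symm
    _ = star v ⬝ᵥ (X *ᵥ v) := by rw [hX.eq]

lemma dot_eq_inner {K : ℕ} (x : EuclideanSpace ℂ (Fin K)) :
    star ((WithLp.equiv 2 _) x) ⬝ᵥ ((WithLp.equiv 2 _) x) = (inner ℂ x x : ℂ) := by
  simp [PiLp.inner_apply, RCLike.inner_apply, dotProduct, mul_comm, -inner_self_eq_norm_sq_to_K]

lemma dot_one_iff {K : ℕ} (x : EuclideanSpace ℂ (Fin K)) :
    star ((WithLp.equiv 2 _) x) ⬝ᵥ ((WithLp.equiv 2 _) x) = 1 ↔ ‖x‖ = 1 := by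
  rw [dot_eq_inner, inner_self_eq_norm_sq_to_K]
  constructor
  · intro h
    have h' : (Complex.ofReal ‖x‖) ^ 2 = 1 := h
    have h2 : ‖x‖ ^ 2 = 1 := by exact_mod_cast h'
    have h3 := Real.sqrt_sq (norm_nonneg x)
    rw [h2] at h3
    simpa using h3.symm
  · intro h; rw [h]; norm_num

lemma one_lt_rank_euclidean {K : ℕ} (hK : 0 < K) :
    1 < Module.rank ℝ (EuclideanSpace ℂ (Fin K)) := by
  have h1 : Module.finrank ℝ (EuclideanSpace ℂ (Fin K)) = 2 * K := by
    have := Module.finrank_mul_finrank ℝ ℂ (EuclideanSpace ℂ (Fin K))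
    rw [Complex.finrank_real_complex, finrank_euclideanSpace_fin] at this
    omega
  have h2 := Module.finrank_eq_rank ℝ (EuclideanSpace ℂ (Fin K))
  rw [h1] at h2
  rw [← h2]
  exact_mod_cast (by omega : 1 < 2 * K)

lemma pnr_continuous {K M : ℕ} (X : Matrix (Fin K × Fin M) (Fin K × Fin M) ℂ) :
    Continuous (fun p : EuclideanSpace ℂ (Fin K) × EuclideanSpace ℂ (Fin M) =>
      (star (prodVec ((WithLp.equiv 2 _) p.1) ((WithLp.equiv 2 _) p.2)) ⬝ᵥ
        (X *ᵥ prodVec ((WithLp.equiv 2 _) p.1) ((WithLp.equiv 2 _) p.2))).re) := by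
  apply Complex.continuous_re.comp
  unfold dotProduct Matrix.mulVec prodVec
  apply continuous_finset_sum
  intro i _
  apply Continuous.mul
  · apply Continuous.star
    exact ((continuous_apply i.1).comp ((PiLp.continuous_ofLp (p := 2) (β := fun _ => ℂ)).comp continuous_fst)).mul
      ((continuous_apply i.2).comp ((PiLp.continuous_ofLp (p := 2) (β := fun _ => ℂ)).comp continuous_snd))
  · apply continuous_finset_sum
    intro j _
    exact continuous_const.mul
      (((continuous_apply j.1).comp ((PiLp.continuous_ofLp (p := 2) (β := fun _ => ℂ)).comp continuous_fst)).mul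
        ((continuous_apply j.2).comp ((PiLp.continuous_ofLp (p := 2) (β := fun _ => ℂ)).comp continuous_snd)))

/-- Product numerical range of a Hermitian operator is a closed interval whose endpoints
are the minimal and maximal product expectation values. -/
theorem pnrR_hermitian_eq_Icc {K M : ℕ} (hK : 0 < K) (hM : 0 < M)
    (X : Matrix (Fin K × Fin M) (Fin K × Fin M) ℂ) (hX : X.IsHermitian) :
    pnrR X = Set.Icc (sInf (pnrR X)) (sSup (pnrR X)) := by
  set f : EuclideanSpace ℂ (Fin K) × EuclideanSpace ℂ (Fin M) → ℝ := fun p =>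
      (star (prodVec ((WithLp.equiv 2 _) p.1) ((WithLp.equiv 2 _) p.2)) ⬝ᵥ
        (X *ᵥ prodVec ((WithLp.equiv 2 _) p.1) ((WithLp.equiv 2 _) p.2))).re with hf
  set S : Set (EuclideanSpace ℂ (Fin K) × EuclideanSpace ℂ (Fin M)) :=
      (Metric.sphere 0 1) ×ˢ (Metric.sphere 0 1) with hS
  have himg : pnrR X = f '' S := by
    ext r
    constructor
    · rintro ⟨x, y, hx, hy, hv⟩
      refine ⟨((WithLp.equiv 2 _).symm x, (WithLp.equiv 2 _).symm y), ⟨?_, ?_⟩, ?_⟩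
      · rw [mem_sphere_zero_iff_norm, ← dot_one_iff]
        simpa using hx
      · rw [mem_sphere_zero_iff_norm, ← dot_one_iff]
        simpa using hy
      · simp only [hf, Equiv.apply_symm_apply]
        rw [hv]
        exact Complex.ofReal_re r
    · rintro ⟨⟨a, b⟩, ⟨ha, hb⟩, rfl⟩
      refine ⟨(WithLp.equiv 2 _) a, (WithLp.equiv 2 _) b, ?_, ?_, ?_⟩
      · exact (dot_one_iff a).mpr (mem_sphere_zero_iff_norm.mp ha)
      · exact (dot_one_iff b).mpr (mem_sphere_zero_iff_norm.mp hb)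
      · exact (quad_real X hX _).symm
  have hS_compact : IsCompact S := (isCompact_sphere 0 1).prod (isCompact_sphere 0 1)
  have hS_conn : IsConnected S :=
    (isConnected_sphere (one_lt_rank_euclidean hK) 0 zero_le_one).prod
      (isConnected_sphere (one_lt_rank_euclidean hM) 0 zero_le_one)
  rw [himg]
  exact eq_Icc_of_connected_compact (hS_conn.image f (pnr_continuous X).continuousOn)
    (hS_compact.image (pnr_continuous X))
end
end

section
/- Every subspace of ℂ^K ⊗ ℂ^M of dimension at least (K−1)(M−1)+1 contains a nonzero product vector ψ_A ⊗ ψ_B. -/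
open Matrix Kronecker
open scoped Pointwise ComplexOrder

noncomputable section

namespace CMWAux

open Module Submodule

variable {k : Type*} [Field k] {E : Type*} [AddCommGroup E] [Module k E]

lemma finrank_comap_subtype (q : Submodule k E) (Kr : Submodule k E) :
    finrank k (Submodule.comap q.subtype Kr) = finrank k ↥(Kr ⊓ q) := by
  have h1 : Submodule.comap q.subtype Kr = Submodule.comap q.subtype (Kr ⊓ q) := by
    ext x
    simp [Submodule.mem_comap, x.2]
  rw [h1]
  exact (Submodule.comapSubtypeEquivOfLe (inf_le_right : Kr ⊓ q ≤ q)).finrank_eq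

lemma finrank_map_add_inf_ker (φ : E →ₗ[k] E) (q : Submodule k E) [FiniteDimensional k q] :
    finrank k (Submodule.map φ q) + finrank k ↥(LinearMap.ker φ ⊓ q) = finrank k q := by
  have := LinearMap.finrank_range_add_finrank_ker (φ.domRestrict q)
  rwa [LinearMap.range_domRestrict, LinearMap.ker_domRestrict, finrank_comap_subtype] at this

/-- The key finrank inequality for the Hilbert-function recursion. -/
lemma aux_fin (φ : E →ₗ[k] E) (A0 A1 B0 V' : Submodule k E)
    [FiniteDimensional k A0] [FiniteDimensional k A1] [FiniteDimensional k V']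
    (hB0V : B0 ≤ V')
    (h1 : A1 ≤ A0 ⊔ Submodule.map φ V')
    (h2 : Submodule.map φ B0 ≤ A0 ⊓ Submodule.map φ V') :
    finrank k A1 + finrank k B0 ≤ finrank k A0 + finrank k V' := by
  have hB0fd : FiniteDimensional k B0 := Submodule.finiteDimensional_of_le hB0V
  have hmapV : FiniteDimensional k (Submodule.map φ V') := by
    have := LinearMap.range_domRestrict V' φ
    rw [← this]
    infer_instance
  have hsupfd : FiniteDimensional k ↥(A0 ⊔ Submodule.map φ V') := inferInstance
  -- rank-nullity on V' and B0
  have rnV : finrank k (Submodule.map φ V') + finrank k ↥(LinearMap.ker φ ⊓ V') = finrank k V' :=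
    finrank_map_add_inf_ker φ V'
  have rnB : finrank k (Submodule.map φ B0) + finrank k ↥(LinearMap.ker φ ⊓ B0) = finrank k B0 :=
    finrank_map_add_inf_ker φ B0
  have hker_mono : finrank k ↥(LinearMap.ker φ ⊓ B0) ≤ finrank k ↥(LinearMap.ker φ ⊓ V') := by
    apply Submodule.finrank_mono
    exact inf_le_inf_left _ hB0V
  have h3 : finrank k A1 ≤ finrank k ↥(A0 ⊔ Submodule.map φ V') := Submodule.finrank_mono h1
  have h4 : finrank k ↥(A0 ⊔ Submodule.map φ V') + finrank k ↥(A0 ⊓ Submodule.map φ V')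
      = finrank k A0 + finrank k (Submodule.map φ V') :=
    Submodule.finrank_sup_add_finrank_inf_eq _ _
  have h5 : finrank k (Submodule.map φ B0) ≤ finrank k ↥(A0 ⊓ Submodule.map φ V') :=
    Submodule.finrank_mono h2
  omega





open Finset

/-- Summation helper: if `(t+1) * u t ≤ C * (t+1)^k` for all `t`, then partial sums of `u`
grow at most like `C*C*(s+1)^k`. -/
lemma sum_helper {u : ℕ → ℕ} {C k : ℕ} (h : ∀ t, (t + 1) * u t ≤ C * (t + 1) ^ k) :
    ∀ s, ∑ t ∈ range (s + 1), u t ≤ C * C * (s + 1) ^ k := by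
  intro s
  rcases Nat.eq_zero_or_pos C with hC | hC
  · subst hC
    have : ∀ t, u t = 0 := by
      intro t
      have := h t
      simp at this
      omega
    simp [this]
  rcases k with _ | k'
  · -- k = 0 : u t = 0 for t ≥ C, u t ≤ C always
    have hu0 : ∀ t, C ≤ t → u t = 0 := by
      intro t ht
      have := h t
      simp only [pow_zero, mul_one] at this
      by_contra hne
      have h1 : 1 ≤ u t := Nat.one_le_iff_ne_zero.mpr hne
      have : t + 1 ≤ (t + 1) * u t := Nat.le_mul_of_pos_right _ h1
      omega
    have huC : ∀ t, u t ≤ C := by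
      intro t
      have := h t
      simp only [pow_zero, mul_one] at this
      calc u t ≤ (t + 1) * u t := Nat.le_mul_of_pos_left _ (by omega)
        _ ≤ C := this
    calc ∑ t ∈ range (s + 1), u t
        ≤ ∑ t ∈ range (s + 1), (if t < C then C else 0) := by
          apply Finset.sum_le_sum
          intro t _
          by_cases htC : t < C
          · simpa [htC] using huC t
          · simp [htC, hu0 t (by omega)]
      _ = ∑ t ∈ (range (s + 1)).filter (· < C), C := by
          rw [Finset.sum_filter]
      _ ≤ ∑ _t ∈ range C, C := by
          apply Finset.sum_le_sum_of_subset
          intro t ht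
          simp only [Finset.mem_filter, Finset.mem_range] at ht ⊢
          omega
      _ = C * C := by simp [Nat.mul_comm]
      _ ≤ C * C * (s + 1) ^ 0 := by simp
  · -- k = k' + 1
    have hu : ∀ t, u t ≤ C * (t + 1) ^ k' := by
      intro t
      have := h t
      have h2 : (t + 1) * u t ≤ (C * (t + 1) ^ k') * (t + 1) := by
        calc (t+1) * u t ≤ C * (t + 1) ^ (k' + 1) := this
          _ = (C * (t + 1) ^ k') * (t + 1) := by ring
      have := Nat.le_of_mul_le_mul_right (by
        calc u t * (t+1) = (t+1) * u t := by ring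
          _ ≤ (C * (t + 1) ^ k') * (t + 1) := h2) (by omega : 0 < t + 1)
      exact this
    calc ∑ t ∈ range (s + 1), u t
        ≤ ∑ _t ∈ range (s + 1), C * (s + 1) ^ k' := by
          apply Finset.sum_le_sum
          intro t ht
          simp only [Finset.mem_range] at ht
          exact (hu t).trans (Nat.mul_le_mul_left _ (Nat.pow_le_pow_left (by omega) _))
      _ = (s + 1) * (C * (s + 1) ^ k') := by simp [Nat.mul_comm]
      _ = C * (s + 1) ^ (k' + 1) := by ring
      _ ≤ C * C * (s + 1) ^ (k' + 1) := Nat.mul_le_mul_right _ (Nat.le_mul_of_pos_right _ hC)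

/-- The main numerical bound extracted from the Hilbert function recursion. -/
lemma num_main {c : ℕ} {g : ℕ → ℕ → ℕ} {S₀ : ℕ}
    (hrec : ∀ i < c, ∀ s, g i (s + 1) ≤ g (i + 1) (s + 1) + g i s)
    (hvan : ∀ s, S₀ ≤ s → g c s = 0) :
    ∃ C, ∀ s, (s + 1) * g 0 s ≤ C * (s + 1) ^ c := by
  suffices H : ∀ k, k ≤ c → ∃ C, ∀ s, (s + 1) * g (c - k) s ≤ C * (s + 1) ^ k by
    obtain ⟨C, hC⟩ := H c le_rfl
    exact ⟨C, by simpa using hC⟩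
  intro k
  induction k with
  | zero =>
    intro _
    refine ⟨(range S₀).sup (fun s => (s + 1) * g c s), fun s => ?_⟩
    simp only [Nat.sub_zero, pow_zero, mul_one]
    by_cases hs : s < S₀
    · exact Finset.le_sup (f := fun s => (s + 1) * g c s) (Finset.mem_range.mpr hs)
    · rw [hvan s (by omega)]
      simp
  | succ k ih =>
    intro hk
    obtain ⟨C, hC⟩ := ih (by omega)
    set i := c - (k + 1) with hi
    have hi1 : i + 1 = c - k := by omega
    have hilt : i < c := by omega
    -- unroll the recursion
    have hunroll : ∀ s, g i s ≤ g i 0 + ∑ j ∈ range s, g (i + 1) (j + 1) := by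
      intro s
      induction s with
      | zero => simp
      | succ s ihs =>
        have := hrec i hilt s
        rw [Finset.sum_range_succ]
        omega
    have hsum : ∀ s, ∑ j ∈ range s, g (i + 1) (j + 1) ≤ C * C * (s + 1) ^ k := by
      intro s
      have hsub : ∑ j ∈ range s, g (i + 1) (j + 1) ≤ ∑ t ∈ range (s + 1), g (i + 1) t := by
        rcases s with _ | s'
        · simp
        · rw [Finset.sum_range_succ' (fun t => g (i+1) t) (s' + 1)]
          omega
      refine hsub.trans (sum_helper (u := fun t => g (i + 1) t) (C := C) (k := k) ?_ s)
      intro t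
      have := hC t
      simp only [← hi1] at this
      exact this
    refine ⟨g i 0 + C * C, fun s => ?_⟩
    have h1 : g i s ≤ g i 0 + C * C * (s + 1) ^ k := (hunroll s).trans (by
      have := hsum s; omega)
    calc (s + 1) * g i s ≤ (s + 1) * (g i 0 + C * C * (s + 1) ^ k) := Nat.mul_le_mul_left _ h1
      _ = (s + 1) * g i 0 + C * C * (s + 1) ^ (k + 1) := by ring
      _ ≤ g i 0 * (s + 1) ^ (k + 1) + C * C * (s + 1) ^ (k + 1) := by
          have : (s + 1) ≤ (s + 1) ^ (k + 1) := by
            calc s + 1 = (s + 1) ^ 1 := (pow_one _).symm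
              _ ≤ (s + 1) ^ (k + 1) := Nat.pow_le_pow_right (by omega) (by omega)
          have h2 : (s + 1) * g i 0 ≤ g i 0 * (s + 1) ^ (k + 1) := by
            calc (s + 1) * g i 0 = g i 0 * (s + 1) := by ring
              _ ≤ g i 0 * (s + 1) ^ (k + 1) := Nat.mul_le_mul_left _ this
          omega
      _ = (g i 0 + C * C) * (s + 1) ^ (k + 1) := by ring






open MvPolynomial Module

variable {a b : ℕ}

/-- Variable index type for bilinear problems. -/
abbrev σab (a b : ℕ) := Sum (Fin a) (Fin b)

/-- Bigrading weight. -/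
def wab (a b : ℕ) : σab a b → ℕ × ℕ := Sum.elim (fun _ => (1, 0)) (fun _ => (0, 1))

abbrev Rab (a b : ℕ) := MvPolynomial (σab a b) ℂ

/-- The diagonal bidegree-(s,s) graded piece. -/
def Vsp (a b s : ℕ) : Submodule ℂ (Rab a b) :=
  weightedHomogeneousSubmodule ℂ (wab a b) (s, s)

lemma weight_wab_eq (d : σab a b →₀ ℕ) :
    Finsupp.weight (wab a b) d
      = (∑ i : Fin a, d (Sum.inl i), ∑ j : Fin b, d (Sum.inr j)) := by
  classical
  rw [Finsupp.weight_apply, Finsupp.sum_fintype _ _ (fun i => by simp)]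
  rw [Fintype.sum_sum_type]
  apply Prod.ext
  · simp [Prod.fst_sum, wab]
  · simp [Prod.snd_sum, wab]

lemma degree_eq_of_weight {d : σab a b →₀ ℕ} {s : ℕ}
    (h : Finsupp.weight (wab a b) d = (s, s)) :
    (d.sum fun _ e => e) = 2 * s := by
  classical
  rw [Finsupp.sum_fintype _ _ (fun i => rfl), Fintype.sum_sum_type]
  rw [weight_wab_eq] at h
  have h1 := congrArg Prod.fst h
  have h2 := congrArg Prod.snd h
  simp only at h1 h2
  omega

lemma Vsp_le_restrict (s : ℕ) : Vsp a b s ≤ restrictTotalDegree (σab a b) ℂ (2 * s) := by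
  intro p hp
  rw [mem_restrictTotalDegree]
  apply Finset.sup_le
  intro d hd
  have hw : Finsupp.weight (wab a b) d = (s, s) := hp (mem_support_iff.mp hd)
  exact le_of_eq (degree_eq_of_weight hw)

instance Vsp_fd (s : ℕ) : FiniteDimensional ℂ (Vsp a b s) :=
  Submodule.finiteDimensional_of_le (Vsp_le_restrict s)

/-- Component of product with a (1,1)-form. -/
lemma wcomp_mul {f : Rab a b} (hf : f ∈ Vsp a b 1) (s : ℕ) (p : Rab a b) :
    weightedHomogeneousComponent (wab a b) (s + 1, s + 1) (p * f)
      = weightedHomogeneousComponent (wab a b) (s, s) p * f := by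
  have hfh : IsWeightedHomogeneous (wab a b) f (1, 1) := hf
  induction p using MvPolynomial.induction_on' with
  | monomial d r =>
      have hmono : IsWeightedHomogeneous (wab a b) (monomial d r)
          (Finsupp.weight (wab a b) d) := isWeightedHomogeneous_monomial _ _ _ rfl
      have hmul : IsWeightedHomogeneous (wab a b) (monomial d r * f)
          (Finsupp.weight (wab a b) d + (1, 1)) := hmono.mul hfh
      by_cases hm : Finsupp.weight (wab a b) d = (s, s)
      · rw [hm] at hmono hmul
        have : ((s, s) : ℕ × ℕ) + (1, 1) = (s + 1, s + 1) := rfl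
        rw [this] at hmul
        rw [hmul.weightedHomogeneousComponent_same,
          hmono.weightedHomogeneousComponent_same]
      · rw [hmul.weightedHomogeneousComponent_ne,
          hmono.weightedHomogeneousComponent_ne]
        · simp
        · exact fun hc => hm hc.symm
        · intro hc
          apply hm
          have : Finsupp.weight (wab a b) d + (1,1) = (s,s) + (1,1) := by
            rw [← hc]; rfl
          exact add_right_cancel this
  | add p q hp hq =>
      rw [add_mul, map_add, map_add, hp, hq, add_mul]

section Ideals

variable (F : ℕ → Rab a b)

/-- Ideal generated by the first `i` forms. -/
def II (i : ℕ) : Ideal (Rab a b) := Ideal.span (F '' Set.Iio i)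

lemma II_mono {i j : ℕ} (h : i ≤ j) : II F i ≤ II F j :=
  Ideal.span_mono (Set.image_mono (fun x hx => lt_of_lt_of_le hx h))

lemma II_zero : II F 0 = ⊥ := by
  have : Set.Iio 0 = (∅ : Set ℕ) := by ext x; simp
  rw [II, this]
  simp

lemma image_Iio_eq_range (i : ℕ) : F '' Set.Iio i = Set.range (fun l : Fin i => F l.1) := by
  ext x
  constructor
  · rintro ⟨l, hl, rfl⟩
    exact ⟨⟨l, hl⟩, rfl⟩
  · rintro ⟨l, rfl⟩
    exact ⟨l.1, l.2, rfl⟩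

lemma mem_II_succ {i : ℕ} {u : Rab a b} (hu : u ∈ II F (i + 1)) :
    ∃ v ∈ II F i, ∃ p : Rab a b, u = v + p * F i := by
  have himg : F '' Set.Iio (i + 1) = F '' Set.Iio i ∪ {F i} := by
    have : Set.Iio (i + 1) = Set.Iio i ∪ {i} := by
      ext x; simp [Nat.lt_succ_iff_lt_or_eq]
    rw [this, Set.image_union, Set.image_singleton]
  rw [II, himg, Ideal.span_union] at hu
  obtain ⟨v, hv, z, hz, rfl⟩ := Submodule.mem_sup.mp hu
  rw [Ideal.mem_span_singleton] at hz
  obtain ⟨p, rfl⟩ := hz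
  exact ⟨v, hv, p, by ring⟩

lemma comp_mem_II (hF : ∀ l, F l ∈ Vsp a b 1) {i : ℕ} {v : Rab a b} (hv : v ∈ II F i)
    (s : ℕ) :
    weightedHomogeneousComponent (wab a b) (s + 1, s + 1) v ∈ II F i := by
  rw [II, image_Iio_eq_range] at hv ⊢
  rw [Ideal.span, mem_span_range_iff_exists_fun] at hv
  obtain ⟨cc, rfl⟩ := hv
  rw [map_sum]
  apply Ideal.sum_mem
  intro l _
  rw [smul_eq_mul, wcomp_mul (hF l.1)]
  exact Ideal.mul_mem_left _ _ (Ideal.subset_span ⟨l, rfl⟩)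

/-- Graded piece of the ideal filtration. -/
def AA (i s : ℕ) : Submodule ℂ (Rab a b) :=
  (II F i).restrictScalars ℂ ⊓ Vsp a b s

instance AA_fd (i s : ℕ) : FiniteDimensional ℂ (AA F i s) := by
  unfold AA
  exact Submodule.finiteDimensional_of_le inf_le_right

lemma AA_mono_i {i j s : ℕ} (h : i ≤ j) : AA F i s ≤ AA F j s :=
  inf_le_inf_right _ (fun x hx => II_mono F h hx)

lemma AA_le_V (i s : ℕ) : AA F i s ≤ Vsp a b s := inf_le_right

lemma claim1 (hF : ∀ l, F l ∈ Vsp a b 1) (i s : ℕ) :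
    AA F (i + 1) (s + 1) ≤
      AA F i (s + 1) ⊔ Submodule.map (LinearMap.mulLeft ℂ (F i)) (Vsp a b s) := by
  rintro u ⟨hu1, hu2⟩
  obtain ⟨v, hv, p, rfl⟩ := mem_II_succ F hu1
  have hu2' : IsWeightedHomogeneous (wab a b) (v + p * F i) (s + 1, s + 1) := hu2
  have hcomp : weightedHomogeneousComponent (wab a b) (s + 1, s + 1) (v + p * F i)
      = v + p * F i := hu2'.weightedHomogeneousComponent_same
  rw [map_add, wcomp_mul (hF i)] at hcomp
  rw [← hcomp]
  apply Submodule.add_mem_sup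
  · refine ⟨comp_mem_II F hF hv s, weightedHomogeneousComponent_mem _ v _⟩
  · refine Submodule.mem_map.mpr ⟨weightedHomogeneousComponent (wab a b) (s, s) p,
      weightedHomogeneousComponent_mem _ p _, ?_⟩
    simp [LinearMap.mulLeft_apply, mul_comm]

lemma claim2 (hF : ∀ l, F l ∈ Vsp a b 1) (i s : ℕ) :
    Submodule.map (LinearMap.mulLeft ℂ (F i)) (AA F i s) ≤
      AA F i (s + 1) ⊓ Submodule.map (LinearMap.mulLeft ℂ (F i)) (Vsp a b s) := by
  rintro _ ⟨q, ⟨hq1, hq2⟩, rfl⟩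
  refine ⟨⟨?_, ?_⟩, Submodule.mem_map.mpr ⟨q, hq2, rfl⟩⟩
  · exact Ideal.mul_mem_left _ _ hq1
  · have : IsWeightedHomogeneous (wab a b) (F i * q) ((1, 1) + (s, s)) :=
      (hF i).mul hq2
    have heq : ((1, 1) : ℕ × ℕ) + (s, s) = (s + 1, s + 1) := by
      simp [Prod.ext_iff, Nat.add_comm]
    rw [heq] at this
    exact this

lemma F1 (hF : ∀ l, F l ∈ Vsp a b 1) (i s : ℕ) :
    finrank ℂ (AA F (i + 1) (s + 1)) + finrank ℂ (AA F i s)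
      ≤ finrank ℂ (AA F i (s + 1)) + finrank ℂ (Vsp a b s) :=
  aux_fin (LinearMap.mulLeft ℂ (F i)) (AA F i (s + 1)) (AA F (i + 1) (s + 1)) (AA F i s)
    (Vsp a b s) (AA_le_V F i s) (claim1 F hF i s) (claim2 F hF i s)

end Ideals


section Part5

open Finsupp

variable {a b : ℕ}

/-- The bilinear form polynomial associated with a coefficient matrix. -/
def formB (Bm : Fin a → Fin b → ℂ) : Rab a b :=
  ∑ i : Fin a, ∑ j : Fin b, MvPolynomial.C (Bm i j) * (X (Sum.inl i) * X (Sum.inr j))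

lemma formB_mem (Bm : Fin a → Fin b → ℂ) : formB Bm ∈ Vsp a b 1 := by
  apply Submodule.sum_mem
  intro i _
  apply Submodule.sum_mem
  intro j _
  have h1 : IsWeightedHomogeneous (wab a b)
      (MvPolynomial.C (Bm i j) * (X (Sum.inl i) * X (Sum.inr j)))
      (0 + ((1, 0) + (0, 1))) :=
    (isWeightedHomogeneous_C (wab a b) _).mul
      ((isWeightedHomogeneous_X _ _ _).mul (isWeightedHomogeneous_X _ _ _))
  have : ((0 : ℕ × ℕ) + ((1, 0) + (0, 1))) = ((1 : ℕ), (1 : ℕ)) := rfl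
  rwa [this] at h1

lemma eval_formB (Bm : Fin a → Fin b → ℂ) (z : σab a b → ℂ) :
    MvPolynomial.eval z (formB Bm)
      = ∑ i : Fin a, ∑ j : Fin b, Bm i j * z (Sum.inl i) * z (Sum.inr j) := by
  simp [formB, mul_assoc]

variable {c : ℕ}

/-- The family of forms, as a function on `ℕ`. -/
def FB (Bf : Fin c → Fin a → Fin b → ℂ) : ℕ → Rab a b :=
  fun l => if h : l < c then formB (Bf ⟨l, h⟩) else 0

lemma FB_mem (Bf : Fin c → Fin a → Fin b → ℂ) (l : ℕ) : FB Bf l ∈ Vsp a b 1 := by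
  unfold FB
  split
  · exact formB_mem _
  · exact Submodule.zero_mem _

lemma exists_pow_mem (Bf : Fin c → Fin a → Fin b → ℂ)
    (hnz : ∀ x : Fin a → ℂ, ∀ y : Fin b → ℂ,
      (∀ l : Fin c, ∑ i : Fin a, ∑ j : Fin b, Bf l i j * x i * y j = 0) → x = 0 ∨ y = 0)
    (i : Fin a) (j : Fin b) :
    ∃ N : ℕ, (X (Sum.inl i) * X (Sum.inr j)) ^ N ∈ II (FB Bf) c := by
  have hvan : (X (Sum.inl i) * X (Sum.inr j) : Rab a b)
      ∈ vanishingIdeal ℂ (zeroLocus ℂ (II (FB Bf) c)) := by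
    rw [mem_vanishingIdeal_iff]
    intro z hz
    rw [mem_zeroLocus_iff] at hz
    have hforms : ∀ l : Fin c,
        ∑ i' : Fin a, ∑ j' : Fin b, Bf l i' j' * z (Sum.inl i') * z (Sum.inr j') = 0 := by
      intro l
      have hmem : FB Bf l.1 ∈ II (FB Bf) c := Ideal.subset_span ⟨l.1, l.2, rfl⟩
      have := hz _ hmem
      change MvPolynomial.eval z _ = 0 at this
      rwa [FB, dif_pos l.2, eval_formB] at this
    have := hnz (fun i' => z (Sum.inl i')) (fun j' => z (Sum.inr j')) hforms
    rcases this with h | h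
    · simp [congrFun h i]
    · simp [congrFun h j]
  rw [vanishingIdeal_zeroLocus_eq_radical] at hvan
  exact hvan

lemma exists_unif_pow (Bf : Fin c → Fin a → Fin b → ℂ)
    (hnz : ∀ x : Fin a → ℂ, ∀ y : Fin b → ℂ,
      (∀ l : Fin c, ∑ i : Fin a, ∑ j : Fin b, Bf l i j * x i * y j = 0) → x = 0 ∨ y = 0) :
    ∃ N : ℕ, ∀ (i : Fin a) (j : Fin b),
      (X (Sum.inl i) * X (Sum.inr j)) ^ N ∈ II (FB Bf) c := by
  choose n hn using fun p : Fin a × Fin b => exists_pow_mem Bf hnz p.1 p.2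
  refine ⟨Finset.univ.sup n, fun i j => ?_⟩
  have hle : n (i, j) ≤ Finset.univ.sup n := Finset.le_sup (Finset.mem_univ _)
  have : (X (Sum.inl i) * X (Sum.inr j) : Rab a b) ^ Finset.univ.sup n
      = (X (Sum.inl i) * X (Sum.inr j)) ^ n (i, j)
        * (X (Sum.inl i) * X (Sum.inr j)) ^ (Finset.univ.sup n - n (i, j)) := by
    rw [← pow_add]
    congr 1
    omega
  rw [this]
  exact Ideal.mul_mem_right _ _ (hn (i, j))

lemma vanish_high (Bf : Fin c → Fin a → Fin b → ℂ) {N : ℕ}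
    (ha : 0 < a) (hb' : 0 < b)
    (hpow : ∀ (i : Fin a) (j : Fin b),
      (X (Sum.inl i) * X (Sum.inr j)) ^ N ∈ II (FB Bf) c)
    {s : ℕ} (hs : (a + b) * N ≤ s) :
    Vsp a b s ≤ (II (FB Bf) c).restrictScalars ℂ := by
  intro p hp
  have hrepr : ∑ d ∈ p.support, (monomial d) (MvPolynomial.coeff d p) = p :=
    MvPolynomial.support_sum_monomial_coeff p
  rw [← hrepr]
  apply Ideal.sum_mem
  intro d hd
  have hw : Finsupp.weight (wab a b) d = (s, s) :=
    hp (MvPolynomial.mem_support_iff.mp hd)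
  rw [weight_wab_eq] at hw
  have hx : ∑ i : Fin a, d (Sum.inl i) = s := congrArg Prod.fst hw
  have hy : ∑ j : Fin b, d (Sum.inr j) = s := congrArg Prod.snd hw
  obtain ⟨i, hi⟩ : ∃ i : Fin a, N ≤ d (Sum.inl i) := by
    by_contra hcon
    push_neg at hcon
    have : ∑ i : Fin a, d (Sum.inl i) < ∑ _i : Fin a, N := by
      apply Finset.sum_lt_sum_of_nonempty
      · exact Finset.univ_nonempty_iff.mpr (Fin.pos_iff_nonempty.mp ha)
      · intro i _; exact hcon i
    simp only [Finset.sum_const, Finset.card_univ, Fintype.card_fin, smul_eq_mul] at this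
    nlinarith
  obtain ⟨j, hj⟩ : ∃ j : Fin b, N ≤ d (Sum.inr j) := by
    by_contra hcon
    push_neg at hcon
    have : ∑ j : Fin b, d (Sum.inr j) < ∑ _j : Fin b, N := by
      apply Finset.sum_lt_sum_of_nonempty
      · exact Finset.univ_nonempty_iff.mpr (Fin.pos_iff_nonempty.mp hb')
      · intro j _; exact hcon j
    simp only [Finset.sum_const, Finset.card_univ, Fintype.card_fin, smul_eq_mul] at this
    nlinarith
  -- divisibility
  set e : σab a b →₀ ℕ := Finsupp.single (Sum.inl i) N + Finsupp.single (Sum.inr j) N with he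
  have hed : e ≤ d := by
    rw [Finsupp.le_iff]
    intro t _
    rcases t with ti | tj
    · by_cases hti : ti = i
      · subst hti
        simp [he, Finsupp.single_apply, hi]
      · simp [he, Finsupp.single_apply, Ne.symm hti, hti]
    · by_cases htj : tj = j
      · subst htj
        simp [he, Finsupp.single_apply, hj]
      · simp [he, Finsupp.single_apply, Ne.symm htj, htj]
  have hXX : ((X (Sum.inl i) * X (Sum.inr j) : Rab a b)) ^ N = monomial e 1 := by
    rw [mul_pow, MvPolynomial.X_pow_eq_monomial, MvPolynomial.X_pow_eq_monomial,
      MvPolynomial.monomial_mul, one_mul]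
  have hfact : (monomial d) (MvPolynomial.coeff d p)
      = (monomial (d - e)) (MvPolynomial.coeff d p) * (X (Sum.inl i) * X (Sum.inr j)) ^ N := by
    rw [hXX, MvPolynomial.monomial_mul, mul_one, tsub_add_cancel_of_le hed]
  rw [hfact]
  exact Ideal.mul_mem_left _ _ (hpow i j)

end Part5


section Part6

open Finsupp

set_option maxHeartbeats 1000000 in
/-- Monomial families give dimension lower bounds. -/
lemma card_le_finrank_of_monomials {σ : Type*} {T : Type*} [Fintype T]
    (V : Submodule ℂ (MvPolynomial σ ℂ)) [FiniteDimensional ℂ V]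
    (D : T → (σ →₀ ℕ)) (hinjD : Function.Injective D)
    (hmem : ∀ t, (MvPolynomial.monomial (D t) (1 : ℂ)) ∈ V) :
    Fintype.card T ≤ finrank ℂ V := by
  have hbasis := (MvPolynomial.basisMonomials σ ℂ).linearIndependent
  have hcomp : LinearIndependent ℂ (fun t : T => (MvPolynomial.monomial (D t) (1 : ℂ))) := by
    have := hbasis.comp D hinjD
    exact this
  have hli : LinearIndependent ℂ (fun t : T => (⟨_, hmem t⟩ : V)) := by
    apply LinearIndependent.of_comp V.subtype
    exact hcomp
  exact hli.fintype_card_le_finrank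

set_option maxHeartbeats 1000000 in
/-- Lower bound on the dimension of the diagonal graded piece. -/
lemma count_lb (a' b' : ℕ) (ha' : 1 ≤ a') (hb' : 1 ≤ b') (u : ℕ) :
    (u + 1) ^ (a' + b') ≤ finrank ℂ (Vsp (a' + 1) (b' + 1) (a' * b' * u)) := by
  classical
  have key : ∀ s : ℕ, s = a' * b' * u →
      (u + 1) ^ (a' + b') ≤ finrank ℂ (Vsp (a' + 1) (b' + 1) s) := by
    intro s hs
    set Dfun : ((Fin a' → Fin (u + 1)) × (Fin b' → Fin (u + 1)))
        → (σab (a' + 1) (b' + 1) → ℕ) := fun t =>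
      Sum.elim (Fin.snoc (fun i => (t.1 i : ℕ)) (s - ∑ i, (t.1 i : ℕ)))
               (Fin.snoc (fun j => (t.2 j : ℕ)) (s - ∑ j, (t.2 j : ℕ))) with hDfun
    set D : ((Fin a' → Fin (u + 1)) × (Fin b' → Fin (u + 1)))
        → (σab (a' + 1) (b' + 1) →₀ ℕ) := fun t => Finsupp.equivFunOnFinite.symm (Dfun t)
      with hD
    have happ : ∀ t p, D t p = Dfun t p := by
      intro t p
      simp [hD, Finsupp.equivFunOnFinite]
    have hsum1 : ∀ (v : Fin a' → Fin (u + 1)), ∑ i, ((v i : ℕ)) ≤ s := by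
      intro v
      calc ∑ i, ((v i : ℕ)) ≤ ∑ _i : Fin a', u := Finset.sum_le_sum (fun i _ => Fin.is_le _)
        _ = a' * u := by simp [Finset.sum_const, Nat.mul_comm]
        _ ≤ s := by
            rw [hs]
            calc a' * u ≤ a' * (b' * u) := Nat.mul_le_mul_left _ (Nat.le_mul_of_pos_left _ hb')
              _ = a' * b' * u := by ring
    have hsum2 : ∀ (v : Fin b' → Fin (u + 1)), ∑ j, ((v j : ℕ)) ≤ s := by
      intro v
      calc ∑ j, ((v j : ℕ)) ≤ ∑ _j : Fin b', u := Finset.sum_le_sum (fun j _ => Fin.is_le _)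
        _ = b' * u := by simp [Finset.sum_const, Nat.mul_comm]
        _ ≤ s := by
            rw [hs]
            calc b' * u ≤ a' * (b' * u) := Nat.le_mul_of_pos_left _ ha'
              _ = a' * b' * u := by ring
    have hwD : ∀ t, Finsupp.weight (wab (a' + 1) (b' + 1)) (D t) = ((s : ℕ), (s : ℕ)) := by
      intro t
      rw [weight_wab_eq]
      have h1 : ∑ i : Fin (a' + 1), D t (Sum.inl i) = s := by
        simp only [happ, hDfun, Sum.elim_inl]
        rw [Fin.sum_univ_castSucc]
        simp only [Fin.snoc_castSucc, Fin.snoc_last]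
        have := hsum1 t.1
        omega
      have h2 : ∑ j : Fin (b' + 1), D t (Sum.inr j) = s := by
        simp only [happ, hDfun, Sum.elim_inr]
        rw [Fin.sum_univ_castSucc]
        simp only [Fin.snoc_castSucc, Fin.snoc_last]
        have := hsum2 t.2
        omega
      rw [h1, h2]
    have hinjD : Function.Injective D := by
      intro t t' htt
      have hfun : Dfun t = Dfun t' := by
        funext p
        rw [← happ, ← happ, htt]
      have h1 : t.1 = t'.1 := by
        funext i
        have := congrFun hfun (Sum.inl i.castSucc)
        simp only [hDfun, Sum.elim_inl, Fin.snoc_castSucc] at this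
        exact Fin.val_injective this
      have h2 : t.2 = t'.2 := by
        funext j
        have := congrFun hfun (Sum.inr j.castSucc)
        simp only [hDfun, Sum.elim_inr, Fin.snoc_castSucc] at this
        exact Fin.val_injective this
      exact Prod.ext h1 h2
    have hmem : ∀ t, (MvPolynomial.monomial (D t) (1 : ℂ)) ∈ Vsp (a' + 1) (b' + 1) s :=
      fun t => isWeightedHomogeneous_monomial _ _ _ (hwD t)
    have := card_le_finrank_of_monomials (Vsp (a' + 1) (b' + 1) s) D hinjD hmem
    calc (u + 1) ^ (a' + b')
        = Fintype.card ((Fin a' → Fin (u + 1)) × (Fin b' → Fin (u + 1))) := by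
          simp [pow_add]
      _ ≤ finrank ℂ (Vsp (a' + 1) (b' + 1) s) := this
  exact key _ rfl

end Part6


section Part7

open Finsupp

set_option maxHeartbeats 1000000 in
/-- Key lemma: `c ≤ a'+b'` bilinear forms on `ℂ^{a'+1} × ℂ^{b'+1}` have a common
nontrivial zero. -/
lemma bilinear_exists {a' b' c : ℕ} (ha' : 1 ≤ a') (hb' : 1 ≤ b') (hc : c ≤ a' + b')
    (Bf : Fin c → Fin (a' + 1) → Fin (b' + 1) → ℂ) :
    ∃ (x : Fin (a' + 1) → ℂ) (y : Fin (b' + 1) → ℂ), x ≠ 0 ∧ y ≠ 0 ∧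
      ∀ l : Fin c, ∑ i, ∑ j, Bf l i j * x i * y j = 0 := by
  by_contra hcon
  push_neg at hcon
  have hnz : ∀ x : Fin (a' + 1) → ℂ, ∀ y : Fin (b' + 1) → ℂ,
      (∀ l : Fin c, ∑ i, ∑ j, Bf l i j * x i * y j = 0) → x = 0 ∨ y = 0 := by
    intro x y hxy
    by_contra hb2
    push_neg at hb2
    obtain ⟨l, hl⟩ := hcon x y hb2.1 hb2.2
    exact hl (hxy l)
  obtain ⟨N, hN⟩ := exists_unif_pow Bf hnz
  set g : ℕ → ℕ → ℕ := fun i s =>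
    finrank ℂ (Vsp (a' + 1) (b' + 1) s) - finrank ℂ (AA (FB Bf) i s) with hg
  have hrec : ∀ i < c, ∀ s, g i (s + 1) ≤ g (i + 1) (s + 1) + g i s := by
    intro i _ s
    have h1 := F1 (FB Bf) (FB_mem Bf) i s
    have h2 : finrank ℂ (AA (FB Bf) i (s + 1)) ≤ finrank ℂ (AA (FB Bf) (i + 1) (s + 1)) :=
      Submodule.finrank_mono (AA_mono_i _ (Nat.le_succ i))
    have h3 : finrank ℂ (AA (FB Bf) (i + 1) (s + 1))
        ≤ finrank ℂ (Vsp (a' + 1) (b' + 1) (s + 1)) :=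
      Submodule.finrank_mono (AA_le_V _ _ _)
    have h4 : finrank ℂ (AA (FB Bf) i s) ≤ finrank ℂ (Vsp (a' + 1) (b' + 1) s) :=
      Submodule.finrank_mono (AA_le_V _ _ _)
    simp only [hg]
    omega
  have hvan : ∀ s, (a' + 1 + (b' + 1)) * N ≤ s → g c s = 0 := by
    intro s hs
    have hle := vanish_high Bf (Nat.succ_pos a') (Nat.succ_pos b') hN hs
    have heq : AA (FB Bf) c s = Vsp (a' + 1) (b' + 1) s :=
      le_antisymm inf_le_right (le_inf hle le_rfl)
    simp only [hg]
    rw [heq]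
    exact Nat.sub_self _
  obtain ⟨C, hC⟩ := num_main hrec hvan
  have hg0 : ∀ s, g 0 s = finrank ℂ (Vsp (a' + 1) (b' + 1) s) := by
    intro s
    have hbot : AA (FB Bf) 0 s = ⊥ := by
      rw [AA, II_zero]
      simp
    simp only [hg]
    rw [hbot]
    simp
  -- final contradiction
  set L := a' * b' with hL
  have hL1 : 1 ≤ L := Nat.one_le_iff_ne_zero.mpr (by positivity)
  set u := C * L ^ c with hu
  set s := L * u with hsdef
  have hcount : (u + 1) ^ (a' + b') ≤ g 0 s := by
    rw [hg0]
    have := count_lb a' b' ha' hb' u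
    convert this using 3
  have hmain := hC s
  rw [hg0] at hmain
  have hfin : (u + 1) ^ (c + 1) ≤ (C * L ^ c) * (u + 1) ^ c := by
    calc (u + 1) ^ (c + 1) = (u + 1) * (u + 1) ^ c := by ring
      _ ≤ (u + 1) * (u + 1) ^ (a' + b') := by
          exact Nat.mul_le_mul_left _ (Nat.pow_le_pow_right (by omega) hc)
      _ ≤ (s + 1) * (u + 1) ^ (a' + b') := by
          have : u ≤ s := by
            rw [hsdef]
            exact Nat.le_mul_of_pos_left _ hL1
          exact Nat.mul_le_mul_right _ (by omega)
      _ ≤ (s + 1) * finrank ℂ (Vsp (a' + 1) (b' + 1) s) := by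
          apply Nat.mul_le_mul_left
          rw [hg0] at hcount
          exact hcount
      _ ≤ C * (s + 1) ^ c := hmain
      _ ≤ C * (L * (u + 1)) ^ c := by
          apply Nat.mul_le_mul_left
          apply Nat.pow_le_pow_left
          rw [hsdef]
          calc L * u + 1 ≤ L * u + L := by omega
            _ = L * (u + 1) := by ring
      _ = (C * L ^ c) * (u + 1) ^ c := by rw [mul_pow]; ring
  have hcancel : u + 1 ≤ C * L ^ c := by
    have hpos : 0 < (u + 1) ^ c := Nat.pow_pos (by omega)
    have : (u + 1) * (u + 1) ^ c ≤ (C * L ^ c) * (u + 1) ^ c := by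
      calc (u + 1) * (u + 1) ^ c = (u + 1) ^ (c + 1) := by ring
        _ ≤ (C * L ^ c) * (u + 1) ^ c := hfin
    exact Nat.le_of_mul_le_mul_right (by
      calc (u + 1) * (u + 1) ^ c = (u + 1) * (u + 1) ^ c := rfl
        _ ≤ (C * L ^ c) * (u + 1) ^ c := this) hpos |>.trans le_rfl
  rw [hu] at hcancel
  omega

end Part7


section Part8

/-- Main reduction: decompose membership in `W` into `c` linear functionals
and apply `bilinear_exists`. -/
theorem main_result {K M : ℕ}
    (W : Submodule ℂ (Fin K × Fin M → ℂ))
    (hW : (K - 1) * (M - 1) + 1 ≤ Module.finrank ℂ W) :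
    ∃ x : Fin K → ℂ, ∃ y : Fin M → ℂ, x ≠ 0 ∧ y ≠ 0 ∧
      (fun p : Fin K × Fin M => x p.1 * y p.2) ∈ W := by
  have hambient : finrank ℂ (Fin K × Fin M → ℂ) = K * M := by
    rw [Module.finrank_fintype_fun_eq_card]
    simp
  have hWle : finrank ℂ W ≤ K * M := hambient ▸ W.finrank_le
  -- degenerate cases
  rcases Nat.lt_or_ge K 2 with hK2 | hK2
  · -- K = 0 or K = 1
    interval_cases K
    · exfalso
      simp only [Nat.zero_mul] at hWle
      omega
    · -- K = 1 : any nonzero vector of W works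
      have hpos : 0 < finrank ℂ W := by omega
      have hWne : W ≠ ⊥ := by
        intro hbot
        rw [hbot] at hpos
        simp at hpos
      obtain ⟨v, hvW, hv0⟩ := Submodule.exists_mem_ne_zero_of_ne_bot hWne
      refine ⟨fun _ => 1, fun j => v (0, j), ?_, ?_, ?_⟩
      · intro h
        have := congrFun h 0
        simp at this
      · intro h
        apply hv0
        funext p
        have h1 : p = (0, p.2) := by
          have : p.1 = 0 := Subsingleton.elim _ _
          rw [← this]
        rw [h1]
        exact congrFun h p.2
      · have : (fun p : Fin 1 × Fin M => (1 : ℂ) * v (0, p.2)) = v := by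
          funext p
          have h1 : p = (0, p.2) := by
            have : p.1 = 0 := Subsingleton.elim _ _
            rw [← this]
          rw [h1]
          simp
        rw [this]
        exact hvW
  rcases Nat.lt_or_ge M 2 with hM2 | hM2
  · interval_cases M
    · exfalso
      simp only [Nat.mul_zero] at hWle
      omega
    · have hpos : 0 < finrank ℂ W := by omega
      have hWne : W ≠ ⊥ := by
        intro hbot
        rw [hbot] at hpos
        simp at hpos
      obtain ⟨v, hvW, hv0⟩ := Submodule.exists_mem_ne_zero_of_ne_bot hWne
      refine ⟨fun i => v (i, 0), fun _ => 1, ?_, ?_, ?_⟩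
      · intro h
        apply hv0
        funext p
        have h1 : p = (p.1, 0) := by
          have : p.2 = 0 := Subsingleton.elim _ _
          rw [← this]
        rw [h1]
        exact congrFun h p.1
      · intro h
        have := congrFun h 0
        simp at this
      · have : (fun p : Fin K × Fin 1 => v (p.1, 0) * 1) = v := by
          funext p
          have h1 : p = (p.1, 0) := by
            have : p.2 = 0 := Subsingleton.elim _ _
            rw [← this]
          rw [h1]
          simp
        rw [this]
        exact hvW
  -- main case : K, M ≥ 2
  obtain ⟨k, rfl⟩ : ∃ k, K = k + 2 := ⟨K - 2, by omega⟩
  obtain ⟨m, rfl⟩ : ∃ m, M = m + 2 := ⟨M - 2, by omega⟩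
  set V := (Fin (k + 2) × Fin (m + 2) → ℂ)
  set c := finrank ℂ (V ⧸ W) with hc
  have hquot : c + finrank ℂ W = (k + 2) * (m + 2) := by
    have h := Submodule.finrank_quotient_add_finrank W
    rw [hambient] at h
    rw [hc]
    exact h
  have hcle : c ≤ (k + 1) + (m + 1) := by
    have e1 : (k + 2 - 1) * (m + 2 - 1) = k * m + k + m + 1 := by
      have h1 : k + 2 - 1 = k + 1 := by omega
      have h2 : m + 2 - 1 = m + 1 := by omega
      rw [h1, h2]
      ring
    have e2 : (k + 2) * (m + 2) = k * m + 2 * k + 2 * m + 4 := by ring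
    rw [e1] at hW
    omega
  -- functionals cutting out W
  set e := (Module.finBasis ℂ (V ⧸ W)).equivFun with he
  set φ : V →ₗ[ℂ] (Fin c → ℂ) := (e : (V ⧸ W) ≃ₗ[ℂ] (Fin c → ℂ)).toLinearMap ∘ₗ W.mkQ with hφ
  have hker : ∀ v : V, v ∈ W ↔ φ v = 0 := by
    intro v
    rw [hφ]
    simp only [LinearMap.coe_comp, Function.comp_apply, LinearEquiv.coe_coe]
    rw [map_eq_zero_iff _ e.injective]
    rw [← LinearMap.mem_ker, Submodule.ker_mkQ]
  set Bf : Fin c → Fin (k + 2) → Fin (m + 2) → ℂ :=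
    fun l i j => φ (Pi.single ((i, j) : Fin (k + 2) × Fin (m + 2)) 1) l with hBf
  have hφeval : ∀ (v : V) (l : Fin c),
      φ v l = ∑ p : Fin (k + 2) × Fin (m + 2), v p * Bf l p.1 p.2 := by
    intro v l
    have hv : v = ∑ p : Fin (k + 2) × Fin (m + 2), Pi.single p (v p) :=
      (Finset.univ_sum_single v).symm
    conv_lhs => rw [hv]
    rw [map_sum, Finset.sum_apply]
    apply Finset.sum_congr rfl
    intro p _
    have hps : (Pi.single p (v p) : V) = v p • (Pi.single p (1 : ℂ) : V) := by
      funext q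
      by_cases hq : q = p <;> simp [Pi.single_apply, hq]
    rw [hps, _root_.map_smul]
    simp [hBf, Prod.mk.eta]
  obtain ⟨x, y, hx, hy, hzero⟩ := bilinear_exists (a' := k + 1) (b' := m + 1)
    (by omega) (by omega) hcle Bf
  refine ⟨x, y, hx, hy, ?_⟩
  rw [hker]
  funext l
  rw [hφeval]
  rw [Fintype.sum_prod_type]
  simp only [Pi.zero_apply]
  rw [← hzero l]
  apply Finset.sum_congr rfl
  intro i _
  apply Finset.sum_congr rfl
  intro j _
  ring

end Part8

end CMWAux

/-- Every subspace of `ℂ^K ⊗ ℂ^M` of dimension at least `(K-1)(M-1)+1`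
contains a nonzero product vector. -/
theorem subspace_contains_product_vector {K M : ℕ}
    (W : Submodule ℂ (Fin K × Fin M → ℂ))
    (hW : (K - 1) * (M - 1) + 1 ≤ Module.finrank ℂ W) :
    ∃ x : Fin K → ℂ, ∃ y : Fin M → ℂ, x ≠ 0 ∧ y ≠ 0 ∧ prodVec x y ∈ W := by
  obtain ⟨x, y, hx, hy, hxy⟩ := CMWAux.main_result W hW
  exact ⟨x, y, hx, hy, hxy⟩
end
end

section
/- For the 4×4 Hermitian matrix X_{t,s} with diagonal (2,1,−1,−2), antidiagonal entries t (positions (1,4),(4,1)) and s (positions (2,3),(3,2)), with t,s ≥ 0, the product numerical range (with respect to the ℂ²⊗ℂ² product structure in the standard basis) equals [−f(t+s), f(t+s)], where f(u) = 2 for 0 ≤ u < √3 and f(u) = √(u⁴+10u²+9)/(2u) for u ≥ √3. -/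
open Matrix Kronecker
open scoped Pointwise ComplexOrder

noncomputable section

/-- The matrix `X_{t,s}` from the paper, written in the product basis
`|00⟩,|01⟩,|10⟩,|11⟩` of `ℂ² ⊗ ℂ²`. -/
def Xts (t s : ℝ) : Matrix (Fin 2 × Fin 2) (Fin 2 × Fin 2) ℂ :=
  Matrix.of fun p q =>
    if p = q then
      (if p = (0, 0) then 2 else if p = (0, 1) then 1 else if p = (1, 0) then -1 else -2)
    else if (p = (0, 0) ∧ q = (1, 1)) ∨ (p = (1, 1) ∧ q = (0, 0)) then (t : ℂ)
    else if (p = (0, 1) ∧ q = (1, 0)) ∨ (p = (1, 0) ∧ q = (0, 1)) then (s : ℂ)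
    else 0

/-- The boundary function `f`. -/
def fXts (u : ℝ) : ℝ :=
  if u < Real.sqrt 3 then 2 else Real.sqrt (u ^ 4 + 10 * u ^ 2 + 9) / (2 * u)


set_option maxHeartbeats 1000000 in
lemma le_of_sq_le_sq'' (x y : ℝ) (hy : 0 ≤ y) (h : x^2 ≤ y^2) : x ≤ y := by
  calc x ≤ |x| := le_abs_self x
  _ = Real.sqrt (x^2) := (Real.sqrt_sq_eq_abs x).symm
  _ ≤ Real.sqrt (y^2) := Real.sqrt_le_sqrt h
  _ = y := Real.sqrt_sq hy

set_option maxHeartbeats 1000000 in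
lemma masterIneq (r u v : ℝ) (hr : 0 ≤ r) (hu1 : -1 ≤ u) (hu2 : u ≤ 1) (hv1 : -1 ≤ v)
    (hv2 : v ≤ 1) :
    (3*u + v)/2 + (r/2) * Real.sqrt (1 - u^2) * Real.sqrt (1 - v^2) ≤ fXts r := by
  have hu : (0:ℝ) ≤ 1 - u^2 := by nlinarith
  have hv : (0:ℝ) ≤ 1 - v^2 := by nlinarith
  set A := Real.sqrt (1 - u^2) with hA
  set c := Real.sqrt (1 - v^2) with hc
  have hA2 : A^2 = 1 - u^2 := Real.sq_sqrt hu
  have hc2 : c^2 = 1 - v^2 := Real.sq_sqrt hv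
  have hA0 : 0 ≤ A := Real.sqrt_nonneg _
  have hc0 : 0 ≤ c := Real.sqrt_nonneg _
  set S := Real.sqrt (1 + r^2*(1 - u^2)) with hS
  have hS0 : 0 ≤ S := Real.sqrt_nonneg _
  have hS2 : S^2 = 1 + r^2*(1 - u^2) := Real.sq_sqrt (by nlinarith)
  have step1 : v + r*A*c ≤ S := by
    apply le_of_sq_le_sq'' _ _ hS0
    have e : S^2 - (v + r*A*c)^2 = (c - r*A*v)^2 := by
      linear_combination hS2 - (1 + r^2*A^2)*hc2 - r^2*hA2
    nlinarith [e, sq_nonneg (c - r*A*v)]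
  have step2 : 3*u + S ≤ 2 * fXts r := by
    unfold fXts
    split_ifs with h
    · have hr2 : r^2 ≤ 3 := by
        nlinarith [Real.sq_sqrt (by norm_num : (0:ℝ) ≤ 3), Real.sqrt_nonneg 3]
      have : S ≤ 4 - 3*u := by
        apply le_of_sq_le_sq'' _ _ (by linarith)
        nlinarith [sq_nonneg (u-1)]
      linarith
    · push_neg at h
      have h3 : Real.sqrt 3 ^ 2 = 3 := Real.sq_sqrt (by norm_num)
      have hs3 : 0 < Real.sqrt 3 := Real.sqrt_pos.2 (by norm_num)
      have hr0 : 0 < r := lt_of_lt_of_le hs3 h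
      have hr2 : 3 ≤ r^2 := by nlinarith
      set T := Real.sqrt (r^4 + 10*r^2 + 9) with hT
      have hT0 : 0 ≤ T := Real.sqrt_nonneg _
      have hT2 : T^2 = r^4 + 10*r^2 + 9 := Real.sq_sqrt (by positivity)
      have hT4 : 4*r ≤ T := by
        apply le_of_sq_le_sq'' _ _ hT0; nlinarith [sq_nonneg (r^2 - 3)]
      have h9 : (0:ℝ) < 9 + r^2 := by positivity
      have iden : ((T - 3*r*u)^2 - (r*S)^2)*(9 + r^2) = (3*T - (9+r^2)*r*u)^2 := by
        linear_combination r^2 * hT2 - r^2*(9+r^2) * hS2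
      have key : r*S ≤ T - 3*r*u := by
        apply le_of_sq_le_sq'' _ _ (by nlinarith)
        nlinarith [sq_nonneg (3*T - (9+r^2)*r*u)]
      rw [mul_div_assoc', le_div_iff₀ (by linarith : (0:ℝ) < 2*r)]
      nlinarith [key]
  nlinarith [mul_nonneg (mul_nonneg hr hA0) hc0]

set_option maxHeartbeats 1000000 in
lemma boundIneq (r P Q R S : ℝ) (hr : 0 ≤ r) (hP : 0 ≤ P) (hQ : 0 ≤ Q) (hR : 0 ≤ R)
    (hS : 0 ≤ S) (hPQ : P + Q = 1) (hRS : R + S = 1) :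
    2*P*R + P*S - Q*R - 2*Q*S + 2*r*(Real.sqrt P * Real.sqrt Q * Real.sqrt R * Real.sqrt S)
      ≤ fXts r := by
  have h1 : Real.sqrt (1 - (P-Q)^2) = 2*(Real.sqrt P * Real.sqrt Q) := by
    rw [show 1 - (P-Q)^2 = (4:ℝ)*(P*Q) by nlinarith [hPQ],
      show (4:ℝ)*(P*Q) = (2*(Real.sqrt P*Real.sqrt Q))^2 by
        rw [mul_pow, mul_pow, Real.sq_sqrt hP, Real.sq_sqrt hQ]; ring]
    exact Real.sqrt_sq (by positivity)
  have h2 : Real.sqrt (1 - (R-S)^2) = 2*(Real.sqrt R * Real.sqrt S) := by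
    rw [show 1 - (R-S)^2 = (4:ℝ)*(R*S) by nlinarith [hRS],
      show (4:ℝ)*(R*S) = (2*(Real.sqrt R*Real.sqrt S))^2 by
        rw [mul_pow, mul_pow, Real.sq_sqrt hR, Real.sq_sqrt hS]; ring]
    exact Real.sqrt_sq (by positivity)
  have hm := masterIneq r (P-Q) (R-S) hr (by linarith) (by linarith) (by linarith) (by linarith)
  rw [h1, h2] at hm
  have e : 2*P*R + P*S - Q*R - 2*Q*S = (3*(P-Q) + (R-S))/2 := by
    have hQ' : Q = 1 - P := by linarith
    have hS' : S = 1 - R := by linarith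
    rw [hQ', hS']; ring
  have e2 : (r/2) * (2*(Real.sqrt P * Real.sqrt Q)) * (2*(Real.sqrt R * Real.sqrt S))
      = 2*r*(Real.sqrt P * Real.sqrt Q * Real.sqrt R * Real.sqrt S) := by ring
  rw [e2] at hm
  linarith [hm]

set_option maxHeartbeats 1000000 in
lemma attainEq (r : ℝ) (hr : 0 ≤ r) : ∃ P R : ℝ, 0 ≤ P ∧ P ≤ 1 ∧ 0 ≤ R ∧ R ≤ 1 ∧
    2*P*R + P*(1-R) - (1-P)*R - 2*(1-P)*(1-R)
      + 2*r*(Real.sqrt P * Real.sqrt (1-P) * Real.sqrt R * Real.sqrt (1-R)) = fXts r := by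
  by_cases h : r < Real.sqrt 3
  · refine ⟨1, 1, by norm_num, by norm_num, by norm_num, by norm_num, ?_⟩
    rw [fXts, if_pos h]
    norm_num
  · push_neg at h
    have h3 : Real.sqrt 3 ^ 2 = 3 := Real.sq_sqrt (by norm_num)
    have hs3 : 0 < Real.sqrt 3 := Real.sqrt_pos.2 (by norm_num)
    have hr0 : 0 < r := lt_of_lt_of_le hs3 h
    have hr2 : 3 ≤ r^2 := by nlinarith
    have hr4 : 9 ≤ r^4 := by nlinarith
    set e := Real.sqrt (r^2+1) with he
    set n := Real.sqrt (r^2+9) with hn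
    set g := Real.sqrt (r^4-9) with hg
    have he2 : e^2 = r^2+1 := Real.sq_sqrt (by positivity)
    have hn2 : n^2 = r^2+9 := Real.sq_sqrt (by positivity)
    have hg2 : g^2 = r^4-9 := Real.sq_sqrt (by linarith)
    have he0 : 0 < e := Real.sqrt_pos.2 (by positivity)
    have hn0 : 0 < n := Real.sqrt_pos.2 (by positivity)
    have hg0 : 0 ≤ g := Real.sqrt_nonneg _
    set u := 3*e/(r*n) with hu
    set v := n/(r*e) with hv
    have hu0 : 0 ≤ u := by positivity
    have hv0 : 0 ≤ v := by positivity
    have hu1 : u ≤ 1 := by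
      rw [hu, div_le_one (by positivity)]
      apply le_of_sq_le_sq'' _ _ (by positivity)
      have hrn : (r*n)^2 = r^2*(r^2+9) := by rw [mul_pow, hn2]
      nlinarith [hrn]
    have hv1 : v ≤ 1 := by
      rw [hv, div_le_one (by positivity)]
      apply le_of_sq_le_sq'' _ _ (by positivity)
      have hre : (r*e)^2 = r^2*(r^2+1) := by rw [mul_pow, he2]
      nlinarith [hre]
    refine ⟨(1+u)/2, (1+v)/2, by linarith, by linarith, by linarith, by linarith, ?_⟩
    have hP1 : Real.sqrt ((1+u)/2) * Real.sqrt (1-(1+u)/2) = g/(2*r*n) := by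
      rw [← Real.sqrt_mul (by linarith)]
      rw [show (1+u)/2 * (1-(1+u)/2) = (g/(2*r*n))^2 by
        rw [hu]; field_simp
        linear_combination r^2*hn2 - 9*he2 - hg2]
      exact Real.sqrt_sq (by positivity)
    have hR1 : Real.sqrt ((1+v)/2) * Real.sqrt (1-(1+v)/2) = g/(2*r*e) := by
      rw [← Real.sqrt_mul (by linarith)]
      rw [show (1+v)/2 * (1-(1+v)/2) = (g/(2*r*e))^2 by
        rw [hv]; field_simp
        linear_combination r^2*he2 - hn2 - hg2]
      exact Real.sqrt_sq (by positivity)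
    have hT : Real.sqrt (r^4 + 10*r^2 + 9) = e * n := by
      rw [show r^4 + 10*r^2 + 9 = (r^2+1)*(r^2+9) by ring,
        Real.sqrt_mul (by positivity), ← he, ← hn]
    rw [fXts, if_neg (not_lt.2 h)]
    rw [show Real.sqrt (r ^ 4 + 10 * r ^ 2 + 9) = Real.sqrt (r^4 + 10*r^2 + 9) by norm_num, hT]
    rw [show Real.sqrt ((1+u)/2) * Real.sqrt (1-(1+u)/2) * Real.sqrt ((1+v)/2)
          * Real.sqrt (1-(1+v)/2)
        = (Real.sqrt ((1+u)/2) * Real.sqrt (1-(1+u)/2))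
          * (Real.sqrt ((1+v)/2) * Real.sqrt (1-(1+v)/2)) by ring,
      hP1, hR1, hu, hv]
    field_simp
    linear_combination (2*r)*((9-n^2)*he2 - r^2*hn2 + hg2)

set_option maxHeartbeats 1000000 in
lemma expand_val (t s : ℝ) (x y : Fin 2 → ℂ) :
    star (prodVec x y) ⬝ᵥ (Xts t s *ᵥ prodVec x y) =
      ((2*Complex.normSq (x 0 * y 0) + Complex.normSq (x 0 * y 1) - Complex.normSq (x 1 * y 0)
        - 2*Complex.normSq (x 1 * y 1)
        + 2*t*((starRingEnd ℂ) (x 0 * y 0) * (x 1 * y 1)).re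
        + 2*s*((starRingEnd ℂ) (x 0 * y 1) * (x 1 * y 0)).re : ℝ) : ℂ) := by
  have h1 : star (prodVec x y) ⬝ᵥ (Xts t s *ᵥ prodVec x y) =
      (starRingEnd ℂ) (x 0 * y 0) * (2*(x 0 * y 0) + t*(x 1 * y 1))
      + (starRingEnd ℂ) (x 0 * y 1) * ((x 0 * y 1) + s*(x 1 * y 0))
      + (starRingEnd ℂ) (x 1 * y 0) * (s*(x 0 * y 1) - (x 1 * y 0))
      + (starRingEnd ℂ) (x 1 * y 1) * (t*(x 0 * y 0) - 2*(x 1 * y 1)) := by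
    simp [dotProduct, mulVec, Xts, prodVec, Fintype.sum_prod_type, Fin.sum_univ_two,
      Prod.ext_iff, Pi.star_apply]
    ring
  rw [h1]
  apply Complex.ext <;>
    simp [Complex.normSq_apply, Complex.mul_re, Complex.mul_im, Complex.add_re,
      Complex.add_im] <;>
    ring

set_option maxHeartbeats 1000000 in
lemma unit_normSq (x : Fin 2 → ℂ) (hx : star x ⬝ᵥ x = 1) :
    Complex.normSq (x 0) + Complex.normSq (x 1) = 1 := by
  have hx' : (starRingEnd ℂ) (x 0) * x 0 + (starRingEnd ℂ) (x 1) * x 1 = 1 := by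
    simpa [dotProduct, Fin.sum_univ_two] using hx
  have : ((Complex.normSq (x 0) + Complex.normSq (x 1) : ℝ) : ℂ) = ((1:ℝ):ℂ) := by
    push_cast
    rw [← Complex.normSq_eq_conj_mul_self, ← Complex.normSq_eq_conj_mul_self] at hx'
    rw [← hx']
  exact_mod_cast this

set_option maxHeartbeats 1000000 in
lemma mem_reals (t s ca sa cb sb : ℝ) (ha : ca^2 + sa^2 = 1) (hb : cb^2 + sb^2 = 1) :
    (2*ca^2*cb^2 + ca^2*sb^2 - sa^2*cb^2 - 2*sa^2*sb^2 + 2*(t+s)*(ca*sa*cb*sb))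
      ∈ pnrR (Xts t s) := by
  refine ⟨![(ca : ℂ), (sa : ℂ)], ![(cb : ℂ), (sb : ℂ)], ?_, ?_, ?_⟩
  · simp [dotProduct, Fin.sum_univ_two, Complex.conj_ofReal, ← Complex.ofReal_mul,
      ← Complex.ofReal_add]
    norm_cast
    nlinarith [ha]
  · simp [dotProduct, Fin.sum_univ_two, Complex.conj_ofReal, ← Complex.ofReal_mul,
      ← Complex.ofReal_add]
    norm_cast
    nlinarith [hb]
  · rw [expand_val]
    simp only [Matrix.cons_val_zero, Matrix.cons_val_one, Matrix.head_cons,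
      ← Complex.ofReal_mul, Complex.conj_ofReal, Complex.normSq_ofReal, Complex.ofReal_re]
    norm_cast
    ring

/-- The value function for real product vectors given by angles. -/
def Fval (t s a b : ℝ) : ℝ :=
  2*(Real.cos a)^2*(Real.cos b)^2 + (Real.cos a)^2*(Real.sin b)^2
    - (Real.sin a)^2*(Real.cos b)^2 - 2*(Real.sin a)^2*(Real.sin b)^2
    + 2*(t+s)*(Real.cos a * Real.sin a * Real.cos b * Real.sin b)

set_option maxHeartbeats 1000000 in
lemma Fval_mem (t s a b : ℝ) : Fval t s a b ∈ pnrR (Xts t s) :=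
  mem_reals t s _ _ _ _ (by nlinarith [Real.sin_sq_add_cos_sq a])
    (by nlinarith [Real.sin_sq_add_cos_sq b])

set_option maxHeartbeats 1000000 in
lemma Fval_cont (t s : ℝ) : Continuous fun p : ℝ × ℝ => Fval t s p.1 p.2 := by
  unfold Fval; fun_prop

set_option maxHeartbeats 1000000 in
lemma path_cont (t s a0 a1 b0 b1 : ℝ) :
    Continuous fun τ : ℝ => Fval t s (a1 + τ*(a0-a1)) (b1 + τ*(b0-b1)) := by
  unfold Fval; fun_prop

set_option maxHeartbeats 4000000

/-- Product numerical range of `X_{t,s}` equals `[-f(t+s), f(t+s)]`. -/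
theorem pnrR_Xts (t s : ℝ) (ht : 0 ≤ t) (hs : 0 ≤ s) :
    pnrR (Xts t s) = Set.Icc (-(fXts (t + s))) (fXts (t + s)) := by
  ext z
  constructor
  · rintro ⟨x, y, hx, hy, hval⟩
    rw [expand_val] at hval
    have hz : 2*Complex.normSq (x 0 * y 0) + Complex.normSq (x 0 * y 1)
        - Complex.normSq (x 1 * y 0) - 2*Complex.normSq (x 1 * y 1)
        + 2*t*((starRingEnd ℂ) (x 0 * y 0) * (x 1 * y 1)).re
        + 2*s*((starRingEnd ℂ) (x 0 * y 1) * (x 1 * y 0)).re = z :=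
      Complex.ofReal_inj.mp hval
    have hPQ := unit_normSq x hx
    have hRS := unit_normSq y hy
    set p1 := Complex.normSq (x 0) with hp1
    set q1 := Complex.normSq (x 1) with hq1
    set p2 := Complex.normSq (y 0) with hp2
    set q2 := Complex.normSq (y 1) with hq2
    have hp1n : 0 ≤ p1 := Complex.normSq_nonneg _
    have hq1n : 0 ≤ q1 := Complex.normSq_nonneg _
    have hp2n : 0 ≤ p2 := Complex.normSq_nonneg _
    have hq2n : 0 ≤ q2 := Complex.normSq_nonneg _
    set w1 := (starRingEnd ℂ) (x 0 * y 0) * (x 1 * y 1) with hw1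
    set w2 := (starRingEnd ℂ) (x 0 * y 1) * (x 1 * y 0) with hw2
    have habs1 : ‖w1‖
        = Real.sqrt p1 * Real.sqrt q1 * Real.sqrt p2 * Real.sqrt q2 := by
      rw [hw1, norm_mul, Complex.norm_conj, norm_mul,
        norm_mul]
      simp only [Complex.norm_def, Complex.normSq_conj, hp1, hq1, hp2, hq2]
      ring
    have habs2 : ‖w2‖
        = Real.sqrt p1 * Real.sqrt q1 * Real.sqrt p2 * Real.sqrt q2 := by
      rw [hw2, norm_mul, Complex.norm_conj, norm_mul,
        norm_mul]
      simp only [Complex.norm_def, Complex.normSq_conj, hp1, hq1, hp2, hq2]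
      ring
    have hre1 := abs_le.mp (Complex.abs_re_le_norm w1)
    have hre2 := abs_le.mp (Complex.abs_re_le_norm w2)
    rw [habs1] at hre1
    rw [habs2] at hre2
    have hns1 : Complex.normSq (x 0 * y 0) = p1 * p2 := by
      rw [Complex.normSq_mul, hp1, hp2]
    have hns2 : Complex.normSq (x 0 * y 1) = p1 * q2 := by
      rw [Complex.normSq_mul, hp1, hq2]
    have hns3 : Complex.normSq (x 1 * y 0) = q1 * p2 := by
      rw [Complex.normSq_mul, hq1, hp2]
    have hns4 : Complex.normSq (x 1 * y 1) = q1 * q2 := by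
      rw [Complex.normSq_mul, hq1, hq2]
    rw [hns1, hns2, hns3, hns4] at hz
    have hub := boundIneq (t+s) p1 q1 p2 q2 (by linarith) hp1n hq1n hp2n hq2n hPQ hRS
    have hlb := boundIneq (t+s) q1 p1 q2 p2 (by linarith) hq1n hp1n hq2n hp2n
      (by linarith) (by linarith)
    have hmeq : Real.sqrt q1 * Real.sqrt p1 * Real.sqrt q2 * Real.sqrt p2
        = Real.sqrt p1 * Real.sqrt q1 * Real.sqrt p2 * Real.sqrt q2 := by ring
    rw [hmeq] at hlb
    have hbt1 := mul_le_mul_of_nonneg_left hre1.2 ht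
    have hbt1' := mul_le_mul_of_nonneg_left hre1.1 ht
    have hbt2 := mul_le_mul_of_nonneg_left hre2.2 hs
    have hbt2' := mul_le_mul_of_nonneg_left hre2.1 hs
    constructor
    · nlinarith [hlb, hbt1', hbt2']
    · nlinarith [hub, hbt1, hbt2]
  · intro hz
    rw [Set.mem_Icc] at hz
    obtain ⟨P, R, hP0, hP1, hR0, hR1, hval⟩ := attainEq (t+s) (by linarith)
    have hsp2 : Real.sqrt P ^ 2 = P := Real.sq_sqrt hP0
    have hsp'2 : Real.sqrt (1-P) ^ 2 = 1 - P := Real.sq_sqrt (by linarith)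
    have hsr2 : Real.sqrt R ^ 2 = R := Real.sq_sqrt hR0
    have hsr'2 : Real.sqrt (1-R) ^ 2 = 1 - R := Real.sq_sqrt (by linarith)
    set α₀ := Real.arccos (Real.sqrt P) with hα₀
    set β₀ := Real.arccos (Real.sqrt R) with hβ₀
    set α₁ := -Real.arccos (Real.sqrt (1-P)) with hα₁
    set β₁ := Real.arccos (Real.sqrt (1-R)) with hβ₁
    have hca0 : Real.cos α₀ = Real.sqrt P :=
      Real.cos_arccos (by linarith [Real.sqrt_nonneg P]) (Real.sqrt_le_one.mpr hP1)
    have hsa0 : Real.sin α₀ = Real.sqrt (1-P) := by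
      rw [hα₀, Real.sin_arccos, hsp2]
    have hcb0 : Real.cos β₀ = Real.sqrt R :=
      Real.cos_arccos (by linarith [Real.sqrt_nonneg R]) (Real.sqrt_le_one.mpr hR1)
    have hsb0 : Real.sin β₀ = Real.sqrt (1-R) := by
      rw [hβ₀, Real.sin_arccos, hsr2]
    have hca1 : Real.cos α₁ = Real.sqrt (1-P) := by
      rw [hα₁, Real.cos_neg]
      exact Real.cos_arccos (by linarith [Real.sqrt_nonneg (1-P)])
        (Real.sqrt_le_one.mpr (by linarith))
    have hsa1 : Real.sin α₁ = -Real.sqrt P := by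
      rw [hα₁, Real.sin_neg, Real.sin_arccos, hsp'2]
      norm_num
    have hcb1 : Real.cos β₁ = Real.sqrt (1-R) :=
      Real.cos_arccos (by linarith [Real.sqrt_nonneg (1-R)])
        (Real.sqrt_le_one.mpr (by linarith))
    have hsb1 : Real.sin β₁ = Real.sqrt R := by
      rw [hβ₁, Real.sin_arccos, hsr'2]
      norm_num
    have hF1 : Fval t s α₀ β₀ = fXts (t+s) := by
      rw [← hval]
      unfold Fval
      rw [hca0, hsa0, hcb0, hsb0, hsp2, hsp'2, hsr2, hsr'2]
    have hF0 : Fval t s α₁ β₁ = -(fXts (t+s)) := by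
      rw [← hval]
      unfold Fval
      rw [hca1, hsa1, hcb1, hsb1]
      rw [show (-Real.sqrt P)^2 = Real.sqrt P ^ 2 by ring, hsp2, hsp'2, hsr2, hsr'2]
      ring
    have hicc := intermediate_value_Icc (zero_le_one (α := ℝ))
      (path_cont t s α₀ α₁ β₀ β₁).continuousOn
    have e0 : Fval t s (α₁ + 0*(α₀-α₁)) (β₁ + 0*(β₀-β₁)) = Fval t s α₁ β₁ := by norm_num
    have e1 : Fval t s (α₁ + 1*(α₀-α₁)) (β₁ + 1*(β₀-β₁)) = Fval t s α₀ β₀ := by norm_num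
    rw [e0, e1, hF0, hF1] at hicc
    obtain ⟨τ, _, hτ⟩ := hicc ⟨hz.1, hz.2⟩
    rw [← hτ]
    exact Fval_mem t s _ _
end
end

section
/- Separable numerical range equals the convex hull of product numerical range: for any operator X on ℂ^K ⊗ ℂ^M, Λ^sep(X) = co(Λ⊗(X)). -/
open Matrix Kronecker
open scoped Pointwise ComplexOrder

noncomputable section

/-- A density matrix: positive semidefinite with unit trace. -/
def IsDensity {n : ℕ} (ρ : Matrix (Fin n) (Fin n) ℂ) : Prop :=
  ρ.PosSemidef ∧ ρ.trace = 1

/-- Separable numerical range: expectation values `Tr(Xρ)` over separable states. -/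
def sepRange {K M : ℕ} (X : Matrix (Fin K × Fin M) (Fin K × Fin M) ℂ) : Set ℂ :=
  {z | ∃ (n : ℕ) (p : Fin n → ℝ) (ρA : Fin n → Matrix (Fin K) (Fin K) ℂ)
      (ρB : Fin n → Matrix (Fin M) (Fin M) ℂ),
    (∀ i, 0 ≤ p i) ∧ (∑ i, p i = 1) ∧ (∀ i, IsDensity (ρA i)) ∧ (∀ i, IsDensity (ρB i)) ∧
    (X * ∑ i, ((p i : ℂ) • (ρA i ⊗ₖ ρB i))).trace = z}

lemma trace_mul_vecMulVec {n : Type*} [Fintype n] (X : Matrix n n ℂ) (u : n → ℂ) :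
    (X * vecMulVec u (star u)).trace = star u ⬝ᵥ (X *ᵥ u) := by
  simp only [trace, diag, mul_apply, vecMulVec_apply, dotProduct, mulVec, Pi.star_apply,
    Finset.mul_sum]
  apply Finset.sum_congr rfl; intro i _
  apply Finset.sum_congr rfl; intro j _
  ring

lemma vecMulVec_kron {K M : ℕ} (x : Fin K → ℂ) (y : Fin M → ℂ) :
    vecMulVec x (star x) ⊗ₖ vecMulVec y (star y)
      = vecMulVec (prodVec x y) (star (prodVec x y)) := by
  ext ⟨i, j⟩ ⟨k, l⟩
  simp [kroneckerMap_apply, vecMulVec_apply, prodVec, mul_comm, mul_assoc, mul_left_comm]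

lemma posSemidef_vecMulVec_star {n : Type*} [Fintype n] [DecidableEq n] (v : n → ℂ) :
    (vecMulVec v (star v)).PosSemidef := by
  have : vecMulVec v (star v)
      = (Matrix.of fun (_ : Fin 1) j => star (v j))ᴴ
          * (Matrix.of fun (_ : Fin 1) j => star (v j)) := by
    ext i j
    simp [mul_apply, vecMulVec_apply, Fin.sum_univ_succ]
  rw [this]
  exact posSemidef_conjTranspose_mul_self _

lemma trace_vecMulVec_star {n : Type*} [Fintype n] (v : n → ℂ) :
    (vecMulVec v (star v)).trace = star v ⬝ᵥ v := by
  simp [trace, diag, vecMulVec_apply, dotProduct, mul_comm]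

lemma trace_mul_sum_smul {d ι : Type*} [Fintype d] [Fintype ι]
    (X : Matrix d d ℂ) (c : ι → ℂ) (Mm : ι → Matrix d d ℂ) :
    (X * ∑ i, c i • Mm i).trace = ∑ i, c i * (X * Mm i).trace := by
  rw [Matrix.mul_sum, trace_sum]
  simp [Matrix.mul_smul, trace_smul, smul_eq_mul]

lemma kron_sum_sum {K M ι κ : Type*} [Fintype ι] [Fintype κ]
    (a : ι → ℂ) (A : ι → Matrix K K ℂ) (b : κ → ℂ) (B : κ → Matrix M M ℂ) :
    (∑ j, a j • A j) ⊗ₖ (∑ k, b k • B k)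
      = ∑ j, ∑ k, (a j * b k) • (A j ⊗ₖ B k) := by
  ext ⟨i, i'⟩ ⟨l, l'⟩
  simp only [kroneckerMap_apply, Matrix.sum_apply, Matrix.smul_apply, smul_eq_mul,
    Finset.sum_mul_sum]
  apply Finset.sum_congr rfl; intro j _
  apply Finset.sum_congr rfl; intro k _
  ring

lemma density_decomp {n : ℕ} {ρ : Matrix (Fin n) (Fin n) ℂ}
    (h1 : ρ.PosSemidef) (h2 : ρ.trace = 1) :
    ∃ (w : Fin n → ℝ) (v : Fin n → (Fin n → ℂ)),
      (∀ j, 0 ≤ w j) ∧ (∑ j, w j = 1) ∧ (∀ j, star (v j) ⬝ᵥ v j = 1) ∧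
      ρ = ∑ j, (w j : ℂ) • vecMulVec (v j) (star (v j)) := by
  have hH := h1.1
  set U : Matrix (Fin n) (Fin n) ℂ := (hH.eigenvectorUnitary : Matrix (Fin n) (Fin n) ℂ) with hU
  have hUU : star U * U = 1 := Unitary.coe_star_mul_self hH.eigenvectorUnitary
  refine ⟨hH.eigenvalues, fun j => fun i => U i j, fun j => h1.eigenvalues_nonneg j, ?_, ?_, ?_⟩
  · have hs : ρ.trace = ∑ j, (hH.eigenvalues j : ℂ) := by
      conv_lhs => rw [hH.spectral_theorem, Unitary.conjStarAlgAut_apply, ← hU]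
      rw [Matrix.trace_mul_cycle, hUU, Matrix.one_mul]
      simp [Matrix.trace_diagonal]
    rw [h2] at hs
    have : ((∑ j, hH.eigenvalues j : ℝ) : ℂ) = 1 := by push_cast; rw [← hs]
    exact_mod_cast this
  · intro j
    have := congrFun (congrFun hUU j) j
    simp only [Matrix.mul_apply, Matrix.one_apply_eq, Matrix.star_apply] at this
    simpa [dotProduct] using this
  · conv_lhs => rw [hH.spectral_theorem, Unitary.conjStarAlgAut_apply, ← hU]
    ext i k
    simp only [Matrix.mul_apply, Matrix.diagonal_apply, Function.comp_apply,
      Matrix.sum_apply, Matrix.smul_apply, Matrix.vecMulVec_apply, Pi.star_apply,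
      Matrix.star_apply, smul_eq_mul]
    apply Finset.sum_congr rfl; intro j _
    simp only [mul_ite, mul_zero, Finset.sum_ite_eq', Finset.mem_univ, if_true]
    rw [mul_right_comm, mul_comm]; rfl


/-- Separable numerical range equals the convex hull of product numerical range. -/
theorem sepRange_eq_convexHull_pnr {K M : ℕ}
    (X : Matrix (Fin K × Fin M) (Fin K × Fin M) ℂ) :
    sepRange X = convexHull ℝ (pnr X) := by
  apply Set.Subset.antisymm
  · -- sepRange ⊆ convexHull
    rintro z ⟨n, p, ρA, ρB, hp0, hp1, hA, hB, hz⟩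
    choose wA vA hwA0 hwA1 hvA hρA using fun i => density_decomp (hA i).1 (hA i).2
    choose wB vB hwB0 hwB1 hvB hρB using fun i => density_decomp (hB i).1 (hB i).2
    -- define the big index type
    set q : Fin n × Fin K × Fin M → ℂ :=
      fun t => star (prodVec (vA t.1 t.2.1) (vB t.1 t.2.2)) ⬝ᵥ
        (X *ᵥ prodVec (vA t.1 t.2.1) (vB t.1 t.2.2)) with hq
    set W : Fin n × Fin K × Fin M → ℝ :=
      fun t => p t.1 * (wA t.1 t.2.1 * wB t.1 t.2.2) with hW
    have hW0 : ∀ t, 0 ≤ W t := fun t =>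
      mul_nonneg (hp0 _) (mul_nonneg (hwA0 _ _) (hwB0 _ _))
    have hW1 : ∑ t, W t = 1 := by
      rw [Fintype.sum_prod_type]
      calc ∑ i, ∑ jk : Fin K × Fin M, W (i, jk)
          = ∑ i, p i * ((∑ j, wA i j) * (∑ k, wB i k)) := by
            apply Finset.sum_congr rfl; intro i _
            rw [Finset.sum_mul_sum, Finset.mul_sum, Fintype.sum_prod_type]
            apply Finset.sum_congr rfl; intro j _
            rw [Finset.mul_sum]
        _ = 1 := by
            simp only [hwA1, hwB1, mul_one]
            exact hp1
    have hzW : z = ∑ t, W t • q t := by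
      rw [← hz, trace_mul_sum_smul]
      rw [Fintype.sum_prod_type]
      apply Finset.sum_congr rfl; intro i _
      rw [hρA i, hρB i, kron_sum_sum]
      have : (∑ j, ∑ k, ((wA i j : ℂ) * (wB i k)) •
          (vecMulVec (vA i j) (star (vA i j)) ⊗ₖ vecMulVec (vB i k) (star (vB i k))))
          = ∑ jk : Fin K × Fin M, ((wA i jk.1 : ℂ) * (wB i jk.2)) •
            vecMulVec (prodVec (vA i jk.1) (vB i jk.2))
              (star (prodVec (vA i jk.1) (vB i jk.2))) := by
        rw [Fintype.sum_prod_type]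
        apply Finset.sum_congr rfl; intro j _
        apply Finset.sum_congr rfl; intro k _
        rw [vecMulVec_kron]
      rw [this, trace_mul_sum_smul, Finset.mul_sum]
      apply Finset.sum_congr rfl; intro jk _
      rw [trace_mul_vecMulVec]
      simp only [hW, hq, Complex.real_smul]
      push_cast
      ring
    rw [hzW, ← Finset.centerMass_eq_of_sum_1 Finset.univ q hW1]
    apply Finset.centerMass_mem_convexHull
    · intro t _; exact hW0 t
    · rw [hW1]; exact one_pos
    · intro t _
      exact ⟨vA t.1 t.2.1, vB t.1 t.2.2, hvA t.1 t.2.1, hvB t.1 t.2.2, rfl⟩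
  · -- convexHull ⊆ sepRange
    rw [convexHull_eq]
    rintro z ⟨ι, t, w, zf, hw0, hw1, hzs, hcm⟩
    choose x y hx hy hxy using fun (i : t) => hzs i i.2
    refine ⟨t.card, fun i => w (t.equivFin.symm i).1,
      fun i => vecMulVec (x (t.equivFin.symm i)) (star (x (t.equivFin.symm i))),
      fun i => vecMulVec (y (t.equivFin.symm i)) (star (y (t.equivFin.symm i))),
      fun i => hw0 _ (t.equivFin.symm i).2, ?_, ?_, ?_, ?_⟩
    · rw [← Equiv.sum_comp t.equivFin (fun i => w (t.equivFin.symm i).1)]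
      simp only [Equiv.symm_apply_apply]
      rw [← Finset.sum_attach t w] at hw1
      exact hw1
    · intro i
      exact ⟨posSemidef_vecMulVec_star _, by rw [trace_vecMulVec_star]; exact hx _⟩
    · intro i
      exact ⟨posSemidef_vecMulVec_star _, by rw [trace_vecMulVec_star]; exact hy _⟩
    · have key : ∀ i : Fin t.card,
        (X * (vecMulVec (x (t.equivFin.symm i)) (star (x (t.equivFin.symm i))) ⊗ₖ
          vecMulVec (y (t.equivFin.symm i)) (star (y (t.equivFin.symm i))))).trace
          = zf (t.equivFin.symm i).1 := by
        intro i
        rw [vecMulVec_kron, trace_mul_vecMulVec, hxy]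
      rw [trace_mul_sum_smul]
      have : (∑ i, ((w (t.equivFin.symm i).1 : ℂ)) *
          (X * (vecMulVec (x (t.equivFin.symm i)) (star (x (t.equivFin.symm i))) ⊗ₖ
            vecMulVec (y (t.equivFin.symm i)) (star (y (t.equivFin.symm i))))).trace)
          = ∑ i : Fin t.card, w (t.equivFin.symm i).1 • zf (t.equivFin.symm i).1 := by
        apply Finset.sum_congr rfl; intro i _
        rw [key i, Complex.real_smul]
      rw [this, ← Equiv.sum_comp t.equivFin
        (fun i => w (t.equivFin.symm i).1 • zf (t.equivFin.symm i).1)]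
      simp only [Equiv.symm_apply_apply]
      rw [Finset.sum_coe_sort t (fun a => w a • zf a)]
      rw [← hcm, Finset.centerMass_eq_of_sum_1 t zf hw1]
end
end

section
/- A linear map Φ from operators on ℂ^K to operators on ℂ^M is positive (maps positive semidefinite matrices to positive semidefinite matrices) if and only if the product numerical range of its Choi matrix D_Φ is contained in [0, ∞). -/
open Matrix Kronecker
open scoped Pointwise ComplexOrder

noncomputable section

/-- The (normalized) Choi matrix `D_Φ = (Φ ⊗ 1)|Ψ₊⟩⟨Ψ₊|` of a linear map on matrices,
so that `⟨k⊗i| D_Φ |l⊗j⟩ = (1/K)·⟨k| Φ(|i⟩⟨j|) |l⟩`. -/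
def choi {K M : ℕ}
    (Φ : Matrix (Fin K) (Fin K) ℂ →ₗ[ℂ] Matrix (Fin M) (Fin M) ℂ) :
    Matrix (Fin M × Fin K) (Fin M × Fin K) ℂ :=
  Matrix.of fun p q => ((K : ℂ))⁻¹ * Φ (Matrix.single p.2 q.2 1) p.1 q.1

/- ### Auxiliary lemmas -/

lemma Phi_vecMulVec {K M : ℕ}
    (Φ : Matrix (Fin K) (Fin K) ℂ →ₗ[ℂ] Matrix (Fin M) (Fin M) ℂ)
    (y : Fin K → ℂ) (k l : Fin M) :
    Φ (vecMulVec (star y) y) k l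
      = ∑ i, ∑ j, (starRingEnd ℂ) (y i) * y j * Φ (Matrix.single i j 1) k l := by
  have h : vecMulVec (star y) y
      = ∑ i, ∑ j, ((starRingEnd ℂ) (y i) * y j) • Matrix.single i j (1 : ℂ) := by
    ext a b
    simp [vecMulVec, Matrix.sum_apply, Matrix.single, Pi.star_apply, mul_ite,
      ite_and, Finset.sum_ite_eq', RCLike.star_def]
  rw [h, map_sum]
  simp only [map_sum, _root_.map_smul, Matrix.sum_apply, Matrix.smul_apply, smul_eq_mul]

/-- The key identity: the quadratic form of the Choi matrix at a product vector is
`(1/K)` times the quadratic form of `Φ(ȳȳ*)` at `x`. -/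
lemma choi_quad {K M : ℕ}
    (Φ : Matrix (Fin K) (Fin K) ℂ →ₗ[ℂ] Matrix (Fin M) (Fin M) ℂ)
    (x : Fin M → ℂ) (y : Fin K → ℂ) :
    star (prodVec x y) ⬝ᵥ (choi Φ *ᵥ prodVec x y)
      = (K : ℂ)⁻¹ * (star x ⬝ᵥ (Φ (vecMulVec (star y) y) *ᵥ x)) := by
  simp only [dotProduct, Matrix.mulVec, Phi_vecMulVec, choi, prodVec, Pi.star_apply,
    Matrix.of_apply, Fintype.sum_prod_type, Finset.mul_sum, Finset.sum_mul, RCLike.star_def,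
    _root_.map_mul]
  have hc : ∀ f : Fin K → Fin M → ℂ, ∑ a, ∑ b, f a b = ∑ b, ∑ a, f a b :=
    fun f => Finset.sum_comm
  refine Finset.sum_congr rfl fun k _ => ?_
  rw [hc]
  refine Finset.sum_congr rfl fun l _ => ?_
  refine Finset.sum_congr rfl fun i _ => ?_
  refine Finset.sum_congr rfl fun j _ => ?_
  ring

lemma psd_vecMulVec {n : Type*} [Fintype n] [DecidableEq n] (y : n → ℂ) :
    (vecMulVec (star y) y).PosSemidef := by
  have : vecMulVec (star y) y = (Matrix.replicateRow Unit y)ᴴ * (Matrix.replicateRow Unit y) := by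
    ext i j; simp [vecMulVec, Matrix.mul_apply, Matrix.replicateRow]
  rw [this]; exact posSemidef_conjTranspose_mul_self _

lemma isHermitian_of_quad {n : Type*} [Fintype n] [DecidableEq n] (N : Matrix n n ℂ)
    (h : ∀ v : n → ℂ, (starRingEnd ℂ) (star v ⬝ᵥ (N *ᵥ v)) = star v ⬝ᵥ (N *ᵥ v)) :
    N.IsHermitian := by
  rw [Matrix.isHermitian_iff_isSymmetric, LinearMap.isSymmetric_iff_inner_map_self_real]
  intro v
  set w : n → ℂ := WithLp.equiv 2 (n → ℂ) v with hw
  have h1 : inner ℂ (Matrix.toEuclideanLin N v) v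
      = (starRingEnd ℂ) (star w ⬝ᵥ (N *ᵥ w)) := by
    rw [EuclideanSpace.inner_eq_star_dotProduct]
    simp only [Matrix.ofLp_toEuclideanLin_apply]
    simp [dotProduct, hw, mul_comm]
  rw [h1, h w, ← h1, h1, h w]

lemma dot_self_ofReal {n : Type*} [Fintype n] (x : n → ℂ) :
    star x ⬝ᵥ x = (((star x ⬝ᵥ x).re : ℝ) : ℂ) ∧ 0 ≤ (star x ⬝ᵥ x).re := by
  have h0 : 0 ≤ star x ⬝ᵥ x := dotProduct_star_self_nonneg x
  rw [Complex.nonneg_iff] at h0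
  exact ⟨Complex.ext rfl h0.2.symm, h0.1⟩

/-- A linear map on matrices is positive iff the product numerical range of its Choi
matrix is contained in `[0, ∞)`. -/
theorem positive_iff_pnr_choi_nonneg {K M : ℕ} (hK : 0 < K)
    (Φ : Matrix (Fin K) (Fin K) ℂ →ₗ[ℂ] Matrix (Fin M) (Fin M) ℂ) :
    (∀ ρ : Matrix (Fin K) (Fin K) ℂ, ρ.PosSemidef → (Φ ρ).PosSemidef) ↔
      pnr (choi Φ) ⊆ {z : ℂ | 0 ≤ z.re ∧ z.im = 0} := by
  constructor
  · -- positivity implies pnr ⊆ [0,∞)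
    rintro hPos z ⟨x, y, hx, hy, rfl⟩
    have hQ : 0 ≤ star x ⬝ᵥ (Φ (vecMulVec (star y) y) *ᵥ x) :=
      (posSemidef_iff_dotProduct_mulVec.mp (hPos _ (psd_vecMulVec y))).2 x
    have hKinv : (0 : ℂ) ≤ (K : ℂ)⁻¹ := by
      rw [show ((K : ℂ))⁻¹ = (((K : ℝ)⁻¹ : ℝ) : ℂ) by push_cast; ring]
      rw [Complex.zero_le_real]
      positivity
    have : 0 ≤ star (prodVec x y) ⬝ᵥ (choi Φ *ᵥ prodVec x y) := by
      rw [choi_quad]; exact mul_nonneg hKinv hQ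
    rw [Complex.nonneg_iff] at this
    exact ⟨this.1, this.2.symm⟩
  · -- pnr ⊆ [0,∞) implies positivity
    intro h
    -- Step 1: the quadratic form of Φ(ȳȳ*) is nonnegative for all x, y.
    have hkey : ∀ (y : Fin K → ℂ) (x : Fin M → ℂ),
        0 ≤ star x ⬝ᵥ (Φ (vecMulVec (star y) y) *ᵥ x) := by
      intro y x
      by_cases hx0 : x = 0
      · simp [hx0]
      by_cases hy0 : y = 0
      · simp [hy0, vecMulVec]
        simp [show (Matrix.of fun _ _ => (0:ℂ)) = (0 : Matrix (Fin K) (Fin K) ℂ) from rfl]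
      -- normalization
      obtain ⟨hax, harx⟩ := dot_self_ofReal x
      obtain ⟨hay, hary⟩ := dot_self_ofReal y
      set ar := (star x ⬝ᵥ x).re with har_def
      set br := (star y ⬝ᵥ y).re with hbr_def
      have har_pos : 0 < ar := by
        rcases harx.lt_or_eq with h1 | h1
        · exact h1
        · exfalso; apply hx0
          apply dotProduct_star_self_eq_zero.mp
          rw [hax, ← h1]; simp
      have hbr_pos : 0 < br := by
        rcases hary.lt_or_eq with h1 | h1
        · exact h1
        · exfalso; apply hy0
          apply dotProduct_star_self_eq_zero.mp
          rw [hay, ← h1]; simp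
      set cx : ℂ := (((Real.sqrt ar)⁻¹ : ℝ) : ℂ) with hcx
      set cy : ℂ := (((Real.sqrt br)⁻¹ : ℝ) : ℂ) with hcy
      have hcx2 : cx * cx = ((ar⁻¹ : ℝ) : ℂ) := by
        rw [hcx, ← Complex.ofReal_mul, ← mul_inv, Real.mul_self_sqrt har_pos.le]
      have hcy2 : cy * cy = ((br⁻¹ : ℝ) : ℂ) := by
        rw [hcy, ← Complex.ofReal_mul, ← mul_inv, Real.mul_self_sqrt hbr_pos.le]
      have hnorm : ∀ {n : Type} [Fintype n] (v : n → ℂ) (c : ℂ),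
          star (c • v) ⬝ᵥ (c • v) = (starRingEnd ℂ) c * c * (star v ⬝ᵥ v) := by
        intro n _ v c
        rw [star_smul, smul_dotProduct, dotProduct_smul]
        simp [RCLike.star_def, mul_assoc]
      have hx1 : star (cx • x) ⬝ᵥ (cx • x) = 1 := by
        rw [hnorm, hcx, Complex.conj_ofReal, ← hcx, hcx2, hax]
        norm_cast
        exact inv_mul_cancel₀ har_pos.ne'
      have hy1 : star (cy • y) ⬝ᵥ (cy • y) = 1 := by
        rw [hnorm, hcy, Complex.conj_ofReal, ← hcy, hcy2, hay]
        norm_cast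
        exact inv_mul_cancel₀ hbr_pos.ne'
      -- apply the hypothesis to the normalized vectors
      have hmem := h ⟨cx • x, cy • y, hx1, hy1, rfl⟩
      set Q := star x ⬝ᵥ (Φ (vecMulVec (star y) y) *ᵥ x) with hQ_def
      have hz' : star (prodVec (cx • x) (cy • y)) ⬝ᵥ (choi Φ *ᵥ prodVec (cx • x) (cy • y))
          = (K : ℂ)⁻¹ * (((ar⁻¹ : ℝ) : ℂ) * (((br⁻¹ : ℝ) : ℂ) * Q)) := by
        rw [choi_quad]
        have hvmv : vecMulVec (star (cy • y)) (cy • y)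
            = (cy * cy) • vecMulVec (star y) y := by
          ext i j
          simp [vecMulVec, Pi.star_apply, hcy, Complex.conj_ofReal]
          ring
        rw [hvmv, _root_.map_smul, Matrix.smul_mulVec, Matrix.mulVec_smul,
          star_smul, smul_dotProduct]
        simp only [dotProduct_smul, smul_eq_mul, RCLike.star_def, hcx,
          Complex.conj_ofReal]
        rw [← hcx, ← hQ_def]
        ring_nf
        rw [show cx ^ 2 = ((ar⁻¹:ℝ):ℂ) by rw [sq]; exact hcx2,
          show cy ^ 2 = ((br⁻¹:ℝ):ℂ) by rw [sq]; exact hcy2]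
        ring
      have hz'nn : 0 ≤ star (prodVec (cx • x) (cy • y)) ⬝ᵥ
          (choi Φ *ᵥ prodVec (cx • x) (cy • y)) := by
        rw [Complex.nonneg_iff]
        exact ⟨hmem.1, hmem.2.symm⟩
      rw [hz'] at hz'nn
      -- recover nonnegativity of Q
      have hQ_eq : Q = ((((K : ℝ) * ar * br : ℝ)) : ℂ) *
          ((K : ℂ)⁻¹ * (((ar⁻¹ : ℝ) : ℂ) * (((br⁻¹ : ℝ) : ℂ) * Q))) := by
        push_cast
        have hK' : (K : ℂ) ≠ 0 := Nat.cast_ne_zero.mpr hK.ne'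
        have har' : ((ar : ℝ) : ℂ) ≠ 0 := Complex.ofReal_ne_zero.mpr har_pos.ne'
        have hbr' : ((br : ℝ) : ℂ) ≠ 0 := Complex.ofReal_ne_zero.mpr hbr_pos.ne'
        field_simp
      rw [hQ_eq]
      apply mul_nonneg _ hz'nn
      rw [Complex.zero_le_real]
      positivity
    -- Step 2: positivity
    intro ρ hρ
    obtain ⟨B, rfl⟩ : ∃ B : Matrix (Fin K) (Fin K) ℂ, ρ = Bᴴ * B := by
      open scoped MatrixOrder Matrix.Norms.L2Operator in
      exact CStarAlgebra.nonneg_iff_eq_star_mul_self.mp hρ.nonneg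
    have hrep : Bᴴ * B = ∑ i, vecMulVec (star (B i)) (B i) := by
      ext j k
      simp [Matrix.mul_apply, vecMulVec, Matrix.sum_apply, Matrix.conjTranspose_apply]
    rw [hrep, map_sum]
    refine Finset.sum_induction _ _ (fun a b ha hb => ha.add hb)
      Matrix.PosSemidef.zero fun i _ => ?_
    refine posSemidef_iff_dotProduct_mulVec.mpr ⟨isHermitian_of_quad _ fun v => ?_, fun v => hkey _ v⟩
    have h0 := hkey (B i) v
    rw [Complex.nonneg_iff] at h0
    rw [Complex.conj_eq_iff_im]
    exact h0.2.symm
end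
end

section
/- Let |φ⟩ and |ψ⟩ be unit vectors in ℂ^N ⊗ ℂ^N with Schmidt coefficient vectors λ and μ. Then for any unitaries U_A, U_B on ℂ^N, the overlap satisfies |⟨ψ| U_A ⊗ U_B |φ⟩|² ≤ (Σ_{j=1}^N √(λ_j^↓ μ_j^↓))², where ↓ denotes decreasing order. -/
open Matrix Kronecker
open scoped Pointwise ComplexOrder

noncomputable section

/-- An orthonormal family of vectors in `ℂ^N`. -/
def OrthonormalFam {N : ℕ} (e : Fin N → (Fin N → ℂ)) : Prop :=
  ∀ i j, star (e i) ⬝ᵥ e j = if i = j then 1 else 0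

/-- `φ` admits a Schmidt decomposition with Schmidt coefficients `lam`. -/
def HasSchmidt {N : ℕ} (φ : Fin N × Fin N → ℂ) (lam : Fin N → ℝ) : Prop :=
  ∃ e f : Fin N → (Fin N → ℂ), OrthonormalFam e ∧ OrthonormalFam f ∧
    φ = ∑ i, ((Real.sqrt (lam i) : ℂ)) • prodVec (e i) (f i)

/-! ### Auxiliary lemmas -/

open Finset

lemma dot_sum_right {n ι : Type*} [Fintype n] (v : n → ℂ) (s : Finset ι) (f : ι → n → ℂ) :
    v ⬝ᵥ (∑ i ∈ s, f i) = ∑ i ∈ s, v ⬝ᵥ f i := by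
  simp only [dotProduct, Finset.sum_apply, Finset.mul_sum]
  exact Finset.sum_comm

lemma dot_sum_left {n ι : Type*} [Fintype n] (v : n → ℂ) (s : Finset ι) (f : ι → n → ℂ) :
    (∑ i ∈ s, f i) ⬝ᵥ v = ∑ i ∈ s, f i ⬝ᵥ v := by
  simp only [dotProduct, Finset.sum_apply, Finset.sum_mul]
  exact Finset.sum_comm

lemma mulVec_sum' {n m ι : Type*} [Fintype n] [Fintype ι] (M : Matrix m n ℂ) (f : ι → n → ℂ) :
    M *ᵥ (∑ i, f i) = ∑ i, M *ᵥ f i := by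
  ext k
  simp only [mulVec, Finset.sum_apply]
  exact dot_sum_right _ _ _

lemma kron_mulVec_prodVec {N : ℕ} (U V : Matrix (Fin N) (Fin N) ℂ)
    (x y : Fin N → ℂ) : (U ⊗ₖ V) *ᵥ prodVec x y = prodVec (U *ᵥ x) (V *ᵥ y) := by
  ext ⟨k, l⟩
  show (fun p => (U ⊗ₖ V) (k,l) p) ⬝ᵥ prodVec x y = (U *ᵥ x) k * (V *ᵥ y) l
  simp only [dotProduct, prodVec, kroneckerMap_apply, mulVec]
  rw [Fintype.sum_prod_type, Finset.sum_mul_sum]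
  exact Finset.sum_congr rfl fun i _ => Finset.sum_congr rfl fun j _ => by ring

lemma star_prodVec_dot {N : ℕ} (a b c d : Fin N → ℂ) :
    star (prodVec a b) ⬝ᵥ prodVec c d = (star a ⬝ᵥ c) * (star b ⬝ᵥ d) := by
  simp only [dotProduct, prodVec, Pi.star_apply, star_mul']
  rw [Fintype.sum_prod_type, Finset.sum_mul_sum]
  exact Finset.sum_congr rfl fun i _ => Finset.sum_congr rfl fun j _ => by ring

lemma dot_expand {n ι κ : Type*} [Fintype n] [Fintype ι] [Fintype κ]
    (c : ι → ℂ) (d : κ → ℂ) (q : ι → n → ℂ) (p : κ → n → ℂ) :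
    star (∑ j, c j • q j) ⬝ᵥ (∑ i, d i • p i)
      = ∑ j, ∑ i, (starRingEnd ℂ (c j) * d i) * (star (q j) ⬝ᵥ p i) := by
  rw [star_sum, dot_sum_left]
  refine Finset.sum_congr rfl fun j _ => ?_
  rw [dot_sum_right]
  refine Finset.sum_congr rfl fun i _ => ?_
  rw [star_smul, smul_dotProduct, dotProduct_smul, smul_eq_mul, smul_eq_mul, Complex.star_def]
  ring

lemma ds_sum_le {N : ℕ} (x y : Fin N → ℝ) (hxy : Monovary x y)
    (D : Matrix (Fin N) (Fin N) ℝ) (hD : D ∈ doublyStochastic ℝ (Fin N)) :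
    ∑ j, ∑ i, x j * D j i * y i ≤ ∑ i, x i * y i := by
  have hlin : IsLinearMap ℝ (fun M : Matrix (Fin N) (Fin N) ℝ => ∑ j, ∑ i, x j * M j i * y i) := by
    constructor
    · intro M N
      rw [← Finset.sum_add_distrib]
      refine Finset.sum_congr rfl fun j _ => ?_
      rw [← Finset.sum_add_distrib]
      exact Finset.sum_congr rfl fun i _ => by simp [Matrix.add_apply]; ring
    · intro c M
      rw [smul_eq_mul, Finset.mul_sum]
      refine Finset.sum_congr rfl fun j _ => ?_
      rw [Finset.mul_sum]
      exact Finset.sum_congr rfl fun i _ => by simp [Matrix.smul_apply, smul_eq_mul]; ring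
  have hconv : Convex ℝ {M : Matrix (Fin N) (Fin N) ℝ |
      (∑ j, ∑ i, x j * M j i * y i) ≤ ∑ i, x i * y i} := convex_halfSpace_le hlin _
  have hsub : {M | ∃ σ : Equiv.Perm (Fin N), σ.permMatrix ℝ = M} ⊆
      {M : Matrix (Fin N) (Fin N) ℝ | (∑ j, ∑ i, x j * M j i * y i) ≤ ∑ i, x i * y i} := by
    rintro M ⟨σ, rfl⟩
    have : ∑ j, ∑ i, x j * (σ.permMatrix ℝ) j i * y i = ∑ j, x j * y (σ j) := by
      refine Finset.sum_congr rfl fun j _ => ?_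
      simp [Equiv.Perm.permMatrix, PEquiv.toMatrix_apply, Equiv.toPEquiv_apply,
        mul_ite, ite_mul, Finset.sum_ite_eq']
    rw [Set.mem_setOf_eq, this]
    exact hxy.sum_mul_comp_perm_le_sum_mul
  have hD' : D ∈ convexHull ℝ {M | ∃ σ : Equiv.Perm (Fin N), σ.permMatrix ℝ = M} := by
    rw [← doublyStochastic_eq_convexHull_permMatrix]; exact hD
  exact convexHull_min hsub hconv hD'

lemma unitary_normSq_ds {N : ℕ} {A : Matrix (Fin N) (Fin N) ℂ}
    (hA : A ∈ Matrix.unitaryGroup (Fin N) ℂ) :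
    (Matrix.of fun j i => Complex.normSq (A j i)) ∈ doublyStochastic ℝ (Fin N) := by
  rw [mem_doublyStochastic_iff_sum]
  refine ⟨fun i j => Complex.normSq_nonneg _, fun j => ?_, fun i => ?_⟩
  · have h1 : (A * star A) j j = 1 := by rw [Matrix.mem_unitaryGroup_iff.mp hA]; simp
    have h2 : (∑ i, (Complex.normSq (A j i) : ℂ)) = 1 := by
      rw [← h1]
      simp only [Matrix.mul_apply, Matrix.star_apply, Complex.star_def]
      exact Finset.sum_congr rfl fun i _ => (Complex.mul_conj _).symm ▸ rfl
    have := congrArg Complex.re h2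
    simpa [Complex.re_sum] using this
  · have h1 : (star A * A) i i = 1 := by rw [Matrix.mem_unitaryGroup_iff'.mp hA]; simp
    have h2 : (∑ j, (Complex.normSq (A j i) : ℂ)) = 1 := by
      rw [← h1]
      simp only [Matrix.mul_apply, Matrix.star_apply, Complex.star_def]
      refine Finset.sum_congr rfl fun j _ => ?_
      rw [mul_comm, Complex.mul_conj]
    have := congrArg Complex.re h2
    simpa [Complex.re_sum] using this

lemma orthonormal_unitary {N : ℕ} {e : Fin N → Fin N → ℂ} (he : OrthonormalFam e) :
    (Matrix.of fun k i => e i k) ∈ Matrix.unitaryGroup (Fin N) ℂ := by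
  rw [Matrix.mem_unitaryGroup_iff']
  ext i j
  have := he i j
  simp only [dotProduct, Pi.star_apply] at this
  simp only [Matrix.star_eq_conjTranspose, Matrix.mul_apply, Matrix.conjTranspose_apply,
    Matrix.of_apply, Matrix.one_apply]
  exact this

lemma entry_eq {N : ℕ} (g e : Fin N → Fin N → ℂ) (U : Matrix (Fin N) (Fin N) ℂ) (j i : Fin N) :
    ((Matrix.of fun k m => g m k)ᴴ * U * (Matrix.of fun k m => e m k)) j i
      = star (g j) ⬝ᵥ (U *ᵥ e i) := by
  rw [Matrix.mul_assoc]
  simp only [Matrix.mul_apply, Matrix.conjTranspose_apply, Matrix.of_apply, dotProduct,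
    Pi.star_apply, mulVec]

/-- Overlap bound: `|⟨ψ| U_A ⊗ U_B |φ⟩|² ≤ (Σ_j √(λ_j^↓ μ_j^↓))²` for unit vectors with
Schmidt coefficient vectors `lam`, `mu` sorted in decreasing order. -/
theorem overlap_le_schmidt_fidelity {N : ℕ}
    (φ ψ : Fin N × Fin N → ℂ) (lam mu : Fin N → ℝ)
    (hl0 : ∀ i, 0 ≤ lam i) (hm0 : ∀ i, 0 ≤ mu i)
    (hl1 : ∑ i, lam i = 1) (hm1 : ∑ i, mu i = 1)
    (hld : Antitone lam) (hmd : Antitone mu)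
    (hφ : HasSchmidt φ lam) (hψ : HasSchmidt ψ mu)
    (U V : Matrix (Fin N) (Fin N) ℂ)
    (hU : U ∈ Matrix.unitaryGroup (Fin N) ℂ) (hV : V ∈ Matrix.unitaryGroup (Fin N) ℂ) :
    ‖star ψ ⬝ᵥ ((U ⊗ₖ V) *ᵥ φ)‖ ^ 2 ≤
      (∑ j, Real.sqrt (lam j * mu j)) ^ 2 := by
  obtain ⟨e, f, he, hf, hφeq⟩ := hφ
  obtain ⟨g, h, hg, hh, hψeq⟩ := hψ
  set A : Matrix (Fin N) (Fin N) ℂ :=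
    (Matrix.of fun k m => g m k)ᴴ * U * (Matrix.of fun k m => e m k) with hAdef
  set B : Matrix (Fin N) (Fin N) ℂ :=
    (Matrix.of fun k m => h m k)ᴴ * V * (Matrix.of fun k m => f m k) with hBdef
  have hAu : A ∈ Matrix.unitaryGroup (Fin N) ℂ := by
    refine mul_mem (mul_mem ?_ hU) (orthonormal_unitary he)
    simpa [Matrix.star_eq_conjTranspose] using Unitary.star_mem (orthonormal_unitary hg)
  have hBu : B ∈ Matrix.unitaryGroup (Fin N) ℂ := by
    refine mul_mem (mul_mem ?_ hV) (orthonormal_unitary hf)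
    simpa [Matrix.star_eq_conjTranspose] using Unitary.star_mem (orthonormal_unitary hh)
  have hz : star ψ ⬝ᵥ ((U ⊗ₖ V) *ᵥ φ)
      = ∑ j, ∑ i, ((Real.sqrt (mu j) : ℂ) * (Real.sqrt (lam i) : ℂ)) * (A j i * B j i) := by
    rw [hφeq, hψeq, mulVec_sum']
    simp_rw [Matrix.mulVec_smul, kron_mulVec_prodVec]
    rw [dot_expand]
    refine Finset.sum_congr rfl fun j _ => Finset.sum_congr rfl fun i _ => ?_
    rw [star_prodVec_dot, Complex.conj_ofReal, ← entry_eq g e U j i, ← entry_eq h f V j i,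
      ← hAdef, ← hBdef]
  have hmono : Monovary (fun j => Real.sqrt (mu j)) (fun i => Real.sqrt (lam i)) :=
    Antitone.monovary (fun a b hab => Real.sqrt_le_sqrt (hmd hab))
      (fun a b hab => Real.sqrt_le_sqrt (hld hab))
  have hTA := ds_sum_le (fun j => Real.sqrt (mu j)) (fun i => Real.sqrt (lam i)) hmono
    (Matrix.of fun j i => Complex.normSq (A j i)) (unitary_normSq_ds hAu)
  have hTB := ds_sum_le (fun j => Real.sqrt (mu j)) (fun i => Real.sqrt (lam i)) hmono
    (Matrix.of fun j i => Complex.normSq (B j i)) (unitary_normSq_ds hBu)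
  simp only [Matrix.of_apply] at hTA hTB
  have habs : ‖star ψ ⬝ᵥ ((U ⊗ₖ V) *ᵥ φ)‖ ≤ ∑ j, Real.sqrt (lam j * mu j) := by
    rw [hz]
    calc ‖∑ j, ∑ i, ((Real.sqrt (mu j) : ℂ) * (Real.sqrt (lam i) : ℂ)) * (A j i * B j i)‖
        ≤ ∑ j, ‖∑ i, ((Real.sqrt (mu j) : ℂ) * (Real.sqrt (lam i) : ℂ)) * (A j i * B j i)‖ :=
          norm_sum_le _ _
      _ ≤ ∑ j, ∑ i, ‖((Real.sqrt (mu j) : ℂ) * (Real.sqrt (lam i) : ℂ)) * (A j i * B j i)‖ :=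
          Finset.sum_le_sum fun j _ => norm_sum_le _ _
      _ = ∑ j, ∑ i, Real.sqrt (mu j) * Real.sqrt (lam i) * (‖A j i‖ * ‖B j i‖) := by
          refine Finset.sum_congr rfl fun j _ => Finset.sum_congr rfl fun i _ => ?_
          simp [norm_mul, Complex.norm_real, abs_of_nonneg (Real.sqrt_nonneg _)]
      _ ≤ ∑ j, ∑ i, Real.sqrt (mu j) * Real.sqrt (lam i) *
            ((Complex.normSq (A j i) + Complex.normSq (B j i)) / 2) := by
          refine Finset.sum_le_sum fun j _ => Finset.sum_le_sum fun i _ => ?_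
          refine mul_le_mul_of_nonneg_left ?_
            (mul_nonneg (Real.sqrt_nonneg _) (Real.sqrt_nonneg _))
          rw [← Complex.sq_norm, ← Complex.sq_norm]
          nlinarith [sq_nonneg (‖A j i‖ - ‖B j i‖)]
      _ = ((∑ j, ∑ i, Real.sqrt (mu j) * Complex.normSq (A j i) * Real.sqrt (lam i))
            + (∑ j, ∑ i, Real.sqrt (mu j) * Complex.normSq (B j i) * Real.sqrt (lam i))) / 2 := by
          rw [← Finset.sum_add_distrib, Finset.sum_div]
          refine Finset.sum_congr rfl fun j _ => ?_
          rw [← Finset.sum_add_distrib, Finset.sum_div]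
          exact Finset.sum_congr rfl fun i _ => by ring
      _ ≤ ((∑ k, Real.sqrt (mu k) * Real.sqrt (lam k))
            + (∑ k, Real.sqrt (mu k) * Real.sqrt (lam k))) / 2 := by
          apply div_le_div_of_nonneg_right (add_le_add hTA hTB) (by norm_num) |>.trans_eq rfl
      _ = ∑ j, Real.sqrt (lam j * mu j) := by
          rw [add_self_div_two]
          exact Finset.sum_congr rfl fun j _ => by
            rw [Real.sqrt_mul (hl0 j), mul_comm]
  have hS0 : 0 ≤ ∑ j, Real.sqrt (lam j * mu j) :=
    Finset.sum_nonneg fun j _ => Real.sqrt_nonneg _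
  exact pow_le_pow_left₀ (norm_nonneg _) habs 2
end
end
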